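/- arXiv:1902.01999 — 5 statements merged into one kernel-verified Lean document; each statement's English description precedes it below -/
import Mathlib

section
/- Let P be a symmetric stochastic n×n matrix and T ⊆ [n] a subset such that for every nonempty R ⊆ T, Σ_{i∈R, j∉R} P_{ij} ≥ α·|R| for some α > 0. Then the principal submatrix P_T (rows and columns indexed by T) has spectral norm at most 1 − α²/2. -/
open BigOperators Finset

lemma indicator_cut (n : ℕ) (P : Matrix (Fin n) (Fin n) ℝ)
    (hsymm : ∀ i j, P i j = P j i) (R : Finset (Fin n)) :
    ∑ i, ∑ j, P i j * |(if i ∈ R then (1:ℝ) else 0) - (if j ∈ R then 1 else 0)| =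
      2 * ∑ i ∈ R, ∑ j ∈ Rᶜ, P i j := by
  have hsplit := Finset.sum_add_sum_compl R
    (fun i => ∑ j, P i j * |(if i ∈ R then (1:ℝ) else 0) - (if j ∈ R then 1 else 0)|)
  rw [← hsplit]
  have h1 : ∀ i ∈ R, ∑ j, P i j * |(if i ∈ R then (1:ℝ) else 0) - (if j ∈ R then 1 else 0)|
      = ∑ j ∈ Rᶜ, P i j := by
    intro i hi
    rw [← Finset.sum_add_sum_compl R
      (fun j => P i j * |(if i ∈ R then (1:ℝ) else 0) - (if j ∈ R then 1 else 0)|)]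
    have e1 : ∑ j ∈ R, P i j * |(if i ∈ R then (1:ℝ) else 0) - (if j ∈ R then 1 else 0)| = 0 := by
      refine Finset.sum_eq_zero fun j hj => by simp [hi, hj]
    have e2 : ∀ j ∈ Rᶜ, P i j * |(if i ∈ R then (1:ℝ) else 0) - (if j ∈ R then 1 else 0)| = P i j := by
      intro j hj
      rw [Finset.mem_compl] at hj
      simp [hi, hj]
    rw [e1, Finset.sum_congr rfl e2, zero_add]
  have h2 : ∀ i ∈ Rᶜ, ∑ j, P i j * |(if i ∈ R then (1:ℝ) else 0) - (if j ∈ R then 1 else 0)|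
      = ∑ j ∈ R, P i j := by
    intro i hi
    rw [Finset.mem_compl] at hi
    rw [← Finset.sum_add_sum_compl R
      (fun j => P i j * |(if i ∈ R then (1:ℝ) else 0) - (if j ∈ R then 1 else 0)|)]
    have e1 : ∀ j ∈ R, P i j * |(if i ∈ R then (1:ℝ) else 0) - (if j ∈ R then 1 else 0)| = P i j := by
      intro j hj; simp [hi, hj]
    have e2 : ∑ j ∈ Rᶜ, P i j * |(if i ∈ R then (1:ℝ) else 0) - (if j ∈ R then 1 else 0)| = 0 := by
      refine Finset.sum_eq_zero fun j hj => by
        rw [Finset.mem_compl] at hj; simp [hi, hj]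
    rw [e2, Finset.sum_congr rfl e1, add_zero]
  rw [Finset.sum_congr rfl h1, Finset.sum_congr rfl h2]
  have h3 : ∑ i ∈ Rᶜ, ∑ j ∈ R, P i j = ∑ i ∈ R, ∑ j ∈ Rᶜ, P i j := by
    refine Finset.sum_comm.trans ?_
    exact Finset.sum_congr rfl fun i _ => Finset.sum_congr rfl fun j _ => hsymm j i
  rw [h3]; ring

lemma coarea (n : ℕ) (P : Matrix (Fin n) (Fin n) ℝ)
    (hsymm : ∀ i j, P i j = P j i)
    (hnonneg : ∀ i j, 0 ≤ P i j)
    (T : Finset (Fin n)) (α : ℝ) (hα : 0 < α)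
    (hexp : ∀ R : Finset (Fin n), R ⊆ T → R.Nonempty →
      α * R.card ≤ ∑ i ∈ R, ∑ j ∈ Rᶜ, P i j)
    (hcut : ∀ R : Finset (Fin n),
      ∑ i, ∑ j, P i j * |(if i ∈ R then (1:ℝ) else 0) - (if j ∈ R then 1 else 0)| =
      2 * ∑ i ∈ R, ∑ j ∈ Rᶜ, P i j) :
    ∀ (N : ℕ) (f : Fin n → ℝ), (∀ i, 0 ≤ f i) → (∀ i, i ∉ T → f i = 0) →
      (Finset.univ.filter (fun i => f i ≠ 0)).card ≤ N →
      2 * α * ∑ i, f i ≤ ∑ i, ∑ j, P i j * |f i - f j| := by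
  intro N
  induction N with
  | zero =>
    intro f hf0 hfT hcard
    have hfz : ∀ i, f i = 0 := by
      intro i
      by_contra h
      have : i ∈ Finset.univ.filter (fun i => f i ≠ 0) := by simp [h]
      have := Finset.card_pos.mpr ⟨i, this⟩
      omega
    simp [hfz]
  | succ N ih =>
    intro f hf0 hfT hcard
    by_cases hR : (Finset.univ.filter (fun i => f i ≠ 0)).Nonempty
    · set R := Finset.univ.filter (fun i => f i ≠ 0) with hRdef
      have hmemR : ∀ i, i ∈ R ↔ f i ≠ 0 := by intro i; simp [hRdef]
      have hRT : R ⊆ T := by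
        intro i hi
        by_contra h
        exact (hmemR i).mp hi (hfT i h)
      set m := R.inf' hR f with hmdef
      obtain ⟨i₀, hi₀R, hi₀⟩ := Finset.exists_mem_eq_inf' hR f
      have hm_le : ∀ i ∈ R, m ≤ f i := fun i hi => Finset.inf'_le f hi
      have hm_pos : 0 < m := by
        rw [hmdef, hi₀]
        exact lt_of_le_of_ne (hf0 i₀) (Ne.symm ((hmemR i₀).mp hi₀R))
      set g := fun i => if i ∈ R then f i - m else 0 with hgdef
      have hg0 : ∀ i, 0 ≤ g i := by
        intro i; simp only [hgdef]
        split
        · next h => linarith [hm_le i h]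
        · exact le_refl 0
      have hgT : ∀ i, i ∉ T → g i = 0 := by
        intro i hi; simp only [hgdef]
        rw [if_neg (fun h => hi (hRT h))]
      have hgsupp : (Finset.univ.filter (fun i => g i ≠ 0)) ⊆ R.erase i₀ := by
        intro i hi
        simp only [Finset.mem_filter, Finset.mem_univ, true_and] at hi
        simp only [hgdef] at hi
        by_cases hiR : i ∈ R
        · rw [if_pos hiR] at hi
          refine Finset.mem_erase.mpr ⟨?_, hiR⟩
          rintro rfl
          rw [hmdef, hi₀] at hi
          exact hi (sub_self _)
        · rw [if_neg hiR] at hi; exact absurd rfl hi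
      have hgcard : (Finset.univ.filter (fun i => g i ≠ 0)).card ≤ N := by
        have h1 := Finset.card_le_card hgsupp
        have h2 := Finset.card_erase_of_mem hi₀R
        have h3 := Finset.card_pos.mpr ⟨i₀, hi₀R⟩
        omega
      have hIH := ih g hg0 hgT hgcard
      have hptf : ∀ i, f i = m * (if i ∈ R then 1 else 0) + g i := by
        intro i
        by_cases hi : i ∈ R
        · simp [hgdef, hi]
        · have hz : f i = 0 := by
            by_contra h; exact hi ((hmemR i).mpr h)
          simp [hgdef, hi, hz]
      have hptabs : ∀ i j, |f i - f j| =
          m * |(if i ∈ R then (1:ℝ) else 0) - (if j ∈ R then 1 else 0)| + |g i - g j| := by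
        intro i j
        have hfi := hptf i
        have hfj := hptf j
        by_cases hi : i ∈ R <;> by_cases hj : j ∈ R <;>
          simp only [hi, hj, if_true, if_false] at hfi hfj ⊢
        · rw [hfi, hfj, sub_self, abs_zero, mul_zero, zero_add]
          congr 1; ring
        · have hgj : g j = 0 := by simp [hgdef, hj]
          have h1 : m * 1 + g i - (m * 0 + g j) = m + g i := by rw [hgj]; ring
          rw [hfi, hfj, h1, hgj]
          simp only [sub_zero, abs_one, mul_one]
          rw [abs_of_nonneg (hg0 i),
            abs_of_nonneg (by linarith [hg0 i] : (0:ℝ) ≤ m + g i)]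
        · have hgi : g i = 0 := by simp [hgdef, hi]
          have h1 : m * 0 + g i - (m * 1 + g j) = -(m + g j) := by rw [hgi]; ring
          rw [hfi, hfj, h1, hgi, abs_neg]
          simp only [zero_sub, abs_neg, abs_one, mul_one]
          rw [abs_of_nonneg (hg0 j),
            abs_of_nonneg (by linarith [hg0 j] : (0:ℝ) ≤ m + g j)]
        · rw [hfi, hfj, sub_self, abs_zero, mul_zero, zero_add]
          congr 1; ring
      have hind_card : ∑ i, (if i ∈ R then (1:ℝ) else 0) = R.card := by simp
      have hsum_f : ∑ i, f i = m * R.card + ∑ i, g i := by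
        calc ∑ i, f i = ∑ i, (m * (if i ∈ R then 1 else 0) + g i) :=
              Finset.sum_congr rfl (fun i _ => hptf i)
        _ = m * (∑ i, (if i ∈ R then (1:ℝ) else 0)) + ∑ i, g i := by
              rw [Finset.sum_add_distrib, Finset.mul_sum]
        _ = m * R.card + ∑ i, g i := by rw [hind_card]
      have hsum_abs : ∑ i, ∑ j, P i j * |f i - f j| =
          m * (∑ i, ∑ j, P i j * |(if i ∈ R then (1:ℝ) else 0) - (if j ∈ R then 1 else 0)|)
          + ∑ i, ∑ j, P i j * |g i - g j| := by
        have hpt : ∀ i j, P i j * |f i - f j| =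
            m * (P i j * |(if i ∈ R then (1:ℝ) else 0) - (if j ∈ R then 1 else 0)|)
            + P i j * |g i - g j| := by
          intro i j; rw [hptabs i j]; ring
        calc ∑ i, ∑ j, P i j * |f i - f j|
            = ∑ i, ∑ j, (m * (P i j * |(if i ∈ R then (1:ℝ) else 0) - (if j ∈ R then 1 else 0)|)
              + P i j * |g i - g j|) :=
              Finset.sum_congr rfl fun i _ => Finset.sum_congr rfl fun j _ => hpt i j
        _ = _ := by simp only [Finset.sum_add_distrib, ← Finset.mul_sum]
      have hcutR := hcut R
      have hexpR := hexp R hRT hR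
      have hmB : m * (α * R.card) ≤ m * ∑ i ∈ R, ∑ j ∈ Rᶜ, P i j :=
        mul_le_mul_of_nonneg_left hexpR hm_pos.le
      rw [hsum_f, hsum_abs, hcutR]
      linarith
    · have hfz : ∀ i, f i = 0 := by
        intro i
        by_contra h
        exact hR ⟨i, by simp [h]⟩
      simp [hfz]

lemma row_sum (n : ℕ) (P : Matrix (Fin n) (Fin n) ℝ)
    (hstoch : ∀ i, ∑ j, P i j = 1) (a : Fin n → ℝ) :
    ∑ i, ∑ j, P i j * a i = ∑ i, a i := by
  refine Finset.sum_congr rfl fun i _ => ?_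
  rw [← Finset.sum_mul, hstoch i, one_mul]

lemma col_sum (n : ℕ) (P : Matrix (Fin n) (Fin n) ℝ)
    (hsymm : ∀ i j, P i j = P j i) (hstoch : ∀ i, ∑ j, P i j = 1)
    (a : Fin n → ℝ) : ∑ i, ∑ j, P i j * a j = ∑ i, a i := by
  rw [Finset.sum_comm]
  refine Finset.sum_congr rfl fun j _ => ?_
  have : ∑ i, P i j = 1 := by
    rw [Finset.sum_congr rfl fun i _ => hsymm i j]; exact hstoch j
  rw [← Finset.sum_mul, this, one_mul]

lemma energy_lb (n : ℕ) (P : Matrix (Fin n) (Fin n) ℝ)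
    (hsymm : ∀ i j, P i j = P j i)
    (hnonneg : ∀ i j, 0 ≤ P i j)
    (hstoch : ∀ i, ∑ j, P i j = 1)
    (T : Finset (Fin n)) (α : ℝ) (hα : 0 < α)
    (hcoarea : ∀ f : Fin n → ℝ, (∀ i, 0 ≤ f i) → (∀ i, i ∉ T → f i = 0) →
      2 * α * ∑ i, f i ≤ ∑ i, ∑ j, P i j * |f i - f j|)
    (w : Fin n → ℝ) (hw0 : ∀ i, 0 ≤ w i) (hwT : ∀ i, i ∉ T → w i = 0) :
    α ^ 2 * ∑ i, w i ^ 2 ≤ ∑ i, ∑ j, P i j * (w i - w j) ^ 2 := by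
  set S := ∑ i, w i ^ 2 with hSdef
  set E := ∑ i, ∑ j, P i j * (w i - w j) ^ 2 with hEdef
  set F := ∑ i, ∑ j, P i j * (w i + w j) ^ 2 with hFdef
  set D := ∑ i, ∑ j, P i j * |w i ^ 2 - w j ^ 2| with hDdef
  have hS0 : 0 ≤ S := Finset.sum_nonneg fun i _ => sq_nonneg _
  have hE0 : 0 ≤ E := Finset.sum_nonneg fun i _ => Finset.sum_nonneg fun j _ =>
    mul_nonneg (hnonneg i j) (sq_nonneg _)
  have hD0 : 0 ≤ D := Finset.sum_nonneg fun i _ => Finset.sum_nonneg fun j _ =>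
    mul_nonneg (hnonneg i j) (abs_nonneg _)
  have h1 : 2 * α * S ≤ D := by
    have := hcoarea (fun i => w i ^ 2) (fun i => sq_nonneg _)
      (fun i hi => by show w i ^ 2 = 0; rw [hwT i hi]; ring)
    exact this
  have hCS : D ^ 2 ≤ E * F := by
    have key := Finset.sum_mul_sq_le_sq_mul_sq Finset.univ
      (fun p : Fin n × Fin n => Real.sqrt (P p.1 p.2) * |w p.1 - w p.2|)
      (fun p : Fin n × Fin n => Real.sqrt (P p.1 p.2) * (w p.1 + w p.2))
    have e1 : ∑ p : Fin n × Fin n,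
        (Real.sqrt (P p.1 p.2) * |w p.1 - w p.2|) * (Real.sqrt (P p.1 p.2) * (w p.1 + w p.2)) = D := by
      rw [Fintype.sum_prod_type, hDdef]
      refine Finset.sum_congr rfl fun i _ => Finset.sum_congr rfl fun j _ => ?_
      have habs : |w i ^ 2 - w j ^ 2| = |w i - w j| * (w i + w j) := by
        rw [show w i ^ 2 - w j ^ 2 = (w i - w j) * (w i + w j) by ring, abs_mul,
          abs_of_nonneg (add_nonneg (hw0 i) (hw0 j))]
      rw [habs, show (Real.sqrt (P i j) * |w i - w j|) * (Real.sqrt (P i j) * (w i + w j))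
        = (Real.sqrt (P i j) * Real.sqrt (P i j)) * (|w i - w j| * (w i + w j)) by ring,
        Real.mul_self_sqrt (hnonneg i j)]
    have e2 : ∑ p : Fin n × Fin n, (Real.sqrt (P p.1 p.2) * |w p.1 - w p.2|) ^ 2 = E := by
      rw [Fintype.sum_prod_type, hEdef]
      refine Finset.sum_congr rfl fun i _ => Finset.sum_congr rfl fun j _ => ?_
      rw [mul_pow, Real.sq_sqrt (hnonneg i j), sq_abs]
    have e3 : ∑ p : Fin n × Fin n, (Real.sqrt (P p.1 p.2) * (w p.1 + w p.2)) ^ 2 = F := by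
      rw [Fintype.sum_prod_type, hFdef]
      refine Finset.sum_congr rfl fun i _ => Finset.sum_congr rfl fun j _ => ?_
      rw [mul_pow, Real.sq_sqrt (hnonneg i j)]
    rw [e1, e2, e3] at key
    exact key
  have hF4 : F ≤ 4 * S := by
    have hpt : ∀ i j, P i j * (w i + w j) ^ 2 ≤ 2 * (P i j * w i ^ 2) + 2 * (P i j * w j ^ 2) := by
      intro i j
      have h2 : (w i + w j) ^ 2 ≤ 2 * w i ^ 2 + 2 * w j ^ 2 := by nlinarith [sq_nonneg (w i - w j)]
      nlinarith [hnonneg i j, mul_le_mul_of_nonneg_left h2 (hnonneg i j)]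
    have hsum : F ≤ ∑ i, ∑ j, (2 * (P i j * w i ^ 2) + 2 * (P i j * w j ^ 2)) := by
      rw [hFdef]
      exact Finset.sum_le_sum fun i _ => Finset.sum_le_sum fun j _ => hpt i j
    have hsplit : ∑ i, ∑ j, (2 * (P i j * w i ^ 2) + 2 * (P i j * w j ^ 2)) = 4 * S := by
      simp only [Finset.sum_add_distrib, ← Finset.mul_sum]
      rw [row_sum n P hstoch (fun i => w i ^ 2), col_sum n P hsymm hstoch (fun i => w i ^ 2)]
      ring
    linarith
  rcases eq_or_lt_of_le hS0 with hS | hS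
  · rw [← hS, mul_zero]; exact hE0
  · have hsq : (2 * α * S) ^ 2 ≤ D ^ 2 := by
      have h0 : 0 ≤ 2 * α * S := by positivity
      exact pow_le_pow_left₀ h0 h1 2
    have hEF : E * F ≤ E * (4 * S) := mul_le_mul_of_nonneg_left hF4 hE0
    nlinarith [hsq, hCS, hEF, hS]

/-- Spectral norm bound for a principal submatrix of a symmetric stochastic matrix,
stated via the Rayleigh quotient (for a symmetric matrix, the spectral norm equals
the supremum of `|vᵀ M v| / vᵀv`). -/
theorem stmt_2 (n : ℕ) (P : Matrix (Fin n) (Fin n) ℝ)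
    (hsymm : ∀ i j, P i j = P j i)
    (hnonneg : ∀ i j, 0 ≤ P i j)
    (hstoch : ∀ i, ∑ j, P i j = 1)
    (T : Finset (Fin n)) (α : ℝ) (hα : 0 < α)
    (hexp : ∀ R : Finset (Fin n), R ⊆ T → R.Nonempty →
      α * R.card ≤ ∑ i ∈ R, ∑ j ∈ Rᶜ, P i j) :
    ∀ v : {x // x ∈ T} → ℝ,
      |∑ i : {x // x ∈ T}, ∑ j : {x // x ∈ T}, v i * P i j * v j| ≤
        (1 - α ^ 2 / 2) * ∑ i : {x // x ∈ T}, (v i) ^ 2 := by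
  intro v
  have hco : ∀ f : Fin n → ℝ, (∀ i, 0 ≤ f i) → (∀ i, i ∉ T → f i = 0) →
      2 * α * ∑ i, f i ≤ ∑ i, ∑ j, P i j * |f i - f j| := by
    intro f hf0 hfT
    exact coarea n P hsymm hnonneg T α hα hexp (indicator_cut n P hsymm)
      (Finset.univ.filter (fun i => f i ≠ 0)).card f hf0 hfT le_rfl
  set w : Fin n → ℝ := fun i => if h : i ∈ T then v ⟨i, h⟩ else 0 with hwdef
  have hwT : ∀ i, i ∉ T → w i = 0 := fun i hi => dif_neg hi
  have hcoe : ∀ i : {x // x ∈ T}, w i.1 = v i := by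
    intro i
    show (if h : i.1 ∈ T then v ⟨i.1, h⟩ else 0) = v i
    rw [dif_pos i.2]
  have hS : ∑ i : {x // x ∈ T}, (v i) ^ 2 = ∑ i, w i ^ 2 := by
    rw [show (∑ i : {x // x ∈ T}, (v i) ^ 2) = ∑ i : {x // x ∈ T}, (w i.1) ^ 2 from
      Finset.sum_congr rfl fun i _ => by rw [hcoe i]]
    rw [Finset.sum_coe_sort T (fun i => w i ^ 2)]
    exact Finset.sum_subset (Finset.subset_univ T) (fun i _ hi => by rw [hwT i hi]; ring)
  have hQ : ∑ i : {x // x ∈ T}, ∑ j : {x // x ∈ T}, v i * P i j * v j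
      = ∑ i, ∑ j, w i * P i j * w j := by
    have step1 : ∀ i : {x // x ∈ T}, ∑ j : {x // x ∈ T}, v i * P i.1 j.1 * v j
        = ∑ j ∈ T, w i.1 * P i.1 j * w j := by
      intro i
      rw [show (∑ j : {x // x ∈ T}, v i * P i.1 j.1 * v j)
          = ∑ j : {x // x ∈ T}, w i.1 * P i.1 j.1 * w j.1 from
        Finset.sum_congr rfl fun j _ => by rw [hcoe i, hcoe j]]
      exact Finset.sum_coe_sort T (fun j => w i.1 * P i.1 j * w j)
    calc ∑ i : {x // x ∈ T}, ∑ j : {x // x ∈ T}, v i * P i.1 j.1 * v j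
        = ∑ i : {x // x ∈ T}, ∑ j ∈ T, w i.1 * P i.1 j * w j :=
          Finset.sum_congr rfl fun i _ => step1 i
    _ = ∑ i ∈ T, ∑ j ∈ T, w i * P i j * w j :=
          Finset.sum_coe_sort T (fun i => ∑ j ∈ T, w i * P i j * w j)
    _ = ∑ i ∈ T, ∑ j, w i * P i j * w j :=
          Finset.sum_congr rfl fun i _ => Finset.sum_subset (Finset.subset_univ T)
            (fun j _ hj => by rw [hwT j hj]; ring)
    _ = ∑ i, ∑ j, w i * P i j * w j :=
          Finset.sum_subset (Finset.subset_univ T)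
            (fun i _ hi => Finset.sum_eq_zero fun j _ => by rw [hwT i hi]; ring)
  rw [hS, hQ]
  set S := ∑ i, w i ^ 2 with hSdef
  set Q := ∑ i, ∑ j, w i * P i j * w j with hQdef
  have hrow : ∑ i, ∑ j, P i j * w i ^ 2 = S := row_sum n P hstoch (fun i => w i ^ 2)
  have hcol : ∑ i, ∑ j, P i j * w j ^ 2 = S := col_sum n P hsymm hstoch (fun i => w i ^ 2)
  have hEid : ∑ i, ∑ j, P i j * (w i - w j) ^ 2 = 2 * S - 2 * Q := by
    calc ∑ i, ∑ j, P i j * (w i - w j) ^ 2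
        = ∑ i, ∑ j, (P i j * w i ^ 2 + P i j * w j ^ 2 - 2 * (w i * P i j * w j)) :=
          Finset.sum_congr rfl fun i _ => Finset.sum_congr rfl fun j _ => by ring
    _ = 2 * S - 2 * Q := by
      simp only [Finset.sum_sub_distrib, Finset.sum_add_distrib, ← Finset.mul_sum]
      rw [hrow, hcol]; ring
  have hFid : ∑ i, ∑ j, P i j * (w i + w j) ^ 2 = 2 * S + 2 * Q := by
    calc ∑ i, ∑ j, P i j * (w i + w j) ^ 2
        = ∑ i, ∑ j, (P i j * w i ^ 2 + P i j * w j ^ 2 + 2 * (w i * P i j * w j)) :=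
          Finset.sum_congr rfl fun i _ => Finset.sum_congr rfl fun j _ => by ring
    _ = 2 * S + 2 * Q := by
      simp only [Finset.sum_add_distrib, ← Finset.mul_sum]
      rw [hrow, hcol]; ring
  have habsE : α ^ 2 * S ≤ ∑ i, ∑ j, P i j * (|w i| - |w j|) ^ 2 := by
    have := energy_lb n P hsymm hnonneg hstoch T α hα hco (fun i => |w i|)
      (fun i => abs_nonneg _) (fun i hi => by show |w i| = 0; rw [hwT i hi]; exact abs_zero)
    simpa [sq_abs] using this
  have hEge : α ^ 2 * S ≤ ∑ i, ∑ j, P i j * (w i - w j) ^ 2 := by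
    refine le_trans habsE (Finset.sum_le_sum fun i _ => Finset.sum_le_sum fun j _ => ?_)
    have hpt : (|w i| - |w j|) ^ 2 ≤ (w i - w j) ^ 2 := by
      nlinarith [le_abs_self (w i * w j), abs_mul (w i) (w j), sq_abs (w i), sq_abs (w j)]
    exact mul_le_mul_of_nonneg_left hpt (hnonneg i j)
  have hFge : α ^ 2 * S ≤ ∑ i, ∑ j, P i j * (w i + w j) ^ 2 := by
    refine le_trans habsE (Finset.sum_le_sum fun i _ => Finset.sum_le_sum fun j _ => ?_)
    have hpt : (|w i| - |w j|) ^ 2 ≤ (w i + w j) ^ 2 := by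
      nlinarith [neg_abs_le (w i * w j), abs_mul (w i) (w j), sq_abs (w i), sq_abs (w j)]
    exact mul_le_mul_of_nonneg_left hpt (hnonneg i j)
  rw [hEid] at hEge
  rw [hFid] at hFge
  rw [abs_le]
  constructor <;> [linarith; linarith]
end

section
/- Let P be a symmetric stochastic matrix with eigenvalues 1 = λ₁ > λ₂ ≥ … ≥ λₙ ≥ −1, and suppose its Cheeger constant χ(P) = min over proper nonempty subsets S of (Σ_{i∈S,j∉S} P_{ij}) / min(|S|, |S̄|) satisfies χ(P) ≥ α > 0. Then λ₂ ≤ 1 − α²/2. -/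
open BigOperators

private lemma telescope (f : ℕ → ℝ) {p q : ℕ} (h : p ≤ q) :
    ∑ k ∈ Finset.Ico p q, (f (k+1) - f k) = f q - f p := by
  rw [Finset.sum_Ico_eq_sub _ h, Finset.sum_range_sub, Finset.sum_range_sub]
  ring

private lemma step1 (m : ℕ) (P : Matrix (Fin (m+1)) (Fin (m+1)) ℝ)
    (hsymm : ∀ i j, P i j = P j i)
    (hnonneg : ∀ i j, 0 ≤ P i j)
    (hstoch : ∀ i, ∑ j, P i j = 1)
    (μ : ℝ) (v : Fin (m+1) → ℝ) (heig : P.mulVec v = μ • v)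
    (W : Finset (Fin (m+1)))
    (u : Fin (m+1) → ℝ)
    (hu0 : ∀ i, 0 ≤ u i) (huv : ∀ i, v i ≤ u i)
    (huW : ∀ i, i ∈ W → u i = v i) (huW' : ∀ i, i ∉ W → u i = 0)
    (hWdef : ∀ i, i ∈ W ↔ 0 < v i)
    (Su : ℝ) (hSu : Su = ∑ i, u i ^ 2) :
    ∑ i, ∑ j, P i j * (u i - u j) ^ 2 ≤ 2 * (1 - μ) * Su := by
  have hcol : ∀ j, ∑ i, P i j = 1 := by
    intro j
    rw [Finset.sum_congr rfl (fun i _ => hsymm i j)]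
    exact hstoch j
  have A1 : ∑ i, ∑ j, P i j * u i ^ 2 = Su := by
    rw [hSu]
    exact Finset.sum_congr rfl fun i _ => by rw [← Finset.sum_mul, hstoch, one_mul]
  have A2 : ∑ i, ∑ j, P i j * u j ^ 2 = Su := by
    rw [Finset.sum_comm, hSu]
    exact Finset.sum_congr rfl fun j _ => by rw [← Finset.sum_mul, hcol, one_mul]
  have A3 : μ * Su ≤ ∑ i, ∑ j, P i j * (u i * u j) := by
    rw [hSu, Finset.mul_sum]
    apply Finset.sum_le_sum
    intro i _
    by_cases hiW : i ∈ W
    · have hui : 0 ≤ u i := hu0 i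
      have h1 : μ * u i ≤ ∑ j, P i j * u j := by
        have hmv : (P.mulVec v) i = ∑ j, P i j * v j := by
          simp [Matrix.mulVec, dotProduct]
        have h2 : ∑ j, P i j * v j ≤ ∑ j, P i j * u j :=
          Finset.sum_le_sum fun j _ => mul_le_mul_of_nonneg_left (huv j) (hnonneg i j)
        have h3 : (P.mulVec v) i = μ * v i := by rw [heig]; rfl
        rw [huW i hiW, ← h3, hmv] at *
        linarith
      calc μ * u i ^ 2 = (μ * u i) * u i := by ring
        _ ≤ (∑ j, P i j * u j) * u i := mul_le_mul_of_nonneg_right h1 hui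
        _ = ∑ j, P i j * (u i * u j) := by rw [Finset.sum_mul]; exact Finset.sum_congr rfl fun j _ => by ring
    · rw [huW' i hiW]
      simp
  have expand : ∑ i, ∑ j, P i j * (u i - u j) ^ 2
      = (∑ i, ∑ j, P i j * u i ^ 2) + (∑ i, ∑ j, P i j * u j ^ 2)
        - 2 * ∑ i, ∑ j, P i j * (u i * u j) := by
    simp_rw [show ∀ i j, P i j * (u i - u j) ^ 2
        = P i j * u i ^ 2 + P i j * u j ^ 2 - 2 * (P i j * (u i * u j))
      from fun i j => by ring, Finset.sum_sub_distrib, Finset.sum_add_distrib, ← Finset.mul_sum]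
  rw [expand, A1, A2]
  nlinarith [A3]


private lemma step2 (m : ℕ) (P : Matrix (Fin (m+1)) (Fin (m+1)) ℝ)
    (hsymm : ∀ i j, P i j = P j i)
    (hnonneg : ∀ i j, 0 ≤ P i j)
    (hstoch : ∀ i, ∑ j, P i j = 1)
    (α : ℝ) (hα : 0 < α)
    (hcheeger : ∀ S : Finset (Fin (m+1)), S.Nonempty → S ≠ Finset.univ →
      α ≤ (∑ i ∈ S, ∑ j ∈ Sᶜ, P i j) / (min S.card Sᶜ.card : ℝ))
    (W : Finset (Fin (m+1)))
    (u : Fin (m+1) → ℝ)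
    (hu0 : ∀ i, 0 ≤ u i)
    (huW' : ∀ i, i ∉ W → u i = 0)
    (hWmem : ∀ i, 0 < u i → i ∈ W)
    (hWcard : 2 * W.card ≤ m + 1)
    (hWne : W.Nonempty)
    (Su : ℝ) (hSu : Su = ∑ i, u i ^ 2) :
    2 * α * Su ≤ ∑ i, ∑ j, P i j * |u i ^ 2 - u j ^ 2| := by
  -- sort `u`
  set σ : Equiv.Perm (Fin (m+1)) := Tuple.sort u with hσ
  have hg : Monotone (u ∘ σ) := Tuple.monotone_sort u
  set H : ℕ → ℝ := fun k => u (σ ⟨min k m, Nat.lt_succ_of_le (min_le_right _ _)⟩) with hH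
  have hHval : ∀ a : Fin (m+1), H a.val = u (σ a) := by
    intro a
    have : min a.val m = a.val := min_eq_left (Nat.le_of_lt_succ a.isLt)
    simp only [hH, this]
  have hHmono : Monotone H := by
    intro p q hpq
    exact hg (show (⟨min p m, _⟩ : Fin (m+1)) ≤ ⟨min q m, _⟩ from by
      simp only [Fin.le_def]; omega)
  have hH0' : ∀ k, 0 ≤ H k := fun k => hu0 _
  have hH0 : H 0 = 0 := by
    have hWlt : W.card < m + 1 := by
      have : 1 ≤ W.card := Finset.card_pos.mpr hWne
      omega
    obtain ⟨i0, hi0⟩ : ∃ i, i ∉ W := by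
      by_contra h
      push_neg at h
      have : W = Finset.univ := Finset.eq_univ_iff_forall.mpr h
      rw [this] at hWlt
      simp at hWlt
    have h1 : H ((σ.symm i0).val) = 0 := by
      rw [hHval]
      simp [huW' _ hi0]
    have h2 : H 0 ≤ H ((σ.symm i0).val) := hHmono (Nat.zero_le _)
    have h3 : 0 ≤ H 0 := hH0' 0
    linarith
  set H2 : ℕ → ℝ := fun k => H k ^ 2 with hH2
  have hH2mono : Monotone H2 := fun p q h =>
    pow_le_pow_left₀ (hH0' p) (hHmono h) 2
  have hH2_0 : H2 0 = 0 := by simp [hH2, hH0]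
  set π : Fin (m+1) → ℕ := fun i => (σ.symm i).val with hπ
  have hπm : ∀ i, π i ≤ m := fun i => Nat.le_of_lt_succ (σ.symm i).isLt
  have huπ : ∀ i, u i = H (π i) := fun i => by rw [hπ]; rw [hHval]; simp
  set δ : ℕ → ℝ := fun k => H2 (k+1) - H2 k with hδ
  have hδ0 : ∀ k, 0 ≤ δ k := fun k => sub_nonneg.mpr (hH2mono (Nat.le_succ k))
  set S : ℕ → Finset (Fin (m+1)) := fun t => Finset.univ.filter (fun i => t ≤ π i) with hS
  set ind : ℕ → Fin (m+1) → Fin (m+1) → ℝ := fun k i j =>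
    if (k+1 ≤ π i ∧ ¬(k+1 ≤ π j)) ∨ (k+1 ≤ π j ∧ ¬(k+1 ≤ π i)) then 1 else 0 with hind
  -- per-pair layer-cake decomposition
  have sub : ∀ p q : ℕ, p ≤ q → q ≤ m →
      H2 q - H2 p = ∑ k ∈ Finset.range m,
        δ k * (if (k+1 ≤ p ∧ ¬(k+1 ≤ q)) ∨ (k+1 ≤ q ∧ ¬(k+1 ≤ p)) then 1 else 0) := by
    intro p q hpq hqm
    have h1 : ∀ k, δ k * (if (k+1 ≤ p ∧ ¬(k+1 ≤ q)) ∨ (k+1 ≤ q ∧ ¬(k+1 ≤ p)) then (1:ℝ) else 0)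
        = if (k+1 ≤ p ∧ ¬(k+1 ≤ q)) ∨ (k+1 ≤ q ∧ ¬(k+1 ≤ p)) then δ k else 0 := by
      intro k
      split <;> ring
    rw [Finset.sum_congr rfl fun k _ => h1 k, ← Finset.sum_filter]
    have h2 : (Finset.range m).filter
        (fun k => (k+1 ≤ p ∧ ¬(k+1 ≤ q)) ∨ (k+1 ≤ q ∧ ¬(k+1 ≤ p))) = Finset.Ico p q := by
      ext k
      simp only [Finset.mem_filter, Finset.mem_range, Finset.mem_Ico]
      omega
    rw [h2]
    exact (telescope H2 hpq).symm
  have pair : ∀ i j : Fin (m+1), |u i ^ 2 - u j ^ 2|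
      = ∑ k ∈ Finset.range m, δ k * ind k i j := by
    intro i j
    rcases le_total (π i) (π j) with hle | hle
    · have h1 : u i ≤ u j := by rw [huπ i, huπ j]; exact hHmono hle
      have h2 : u i ^ 2 ≤ u j ^ 2 := pow_le_pow_left₀ (hu0 i) h1 2
      have h3 : |u i ^ 2 - u j ^ 2| = H2 (π j) - H2 (π i) := by
        rw [abs_of_nonpos (by linarith), huπ i, huπ j]
        simp [hH2]
      rw [h3, sub (π i) (π j) hle (hπm j)]
      all_goals
        refine Finset.sum_congr rfl fun k _ => ?_
        simp only [hind]
        split_ifs <;> first | rfl | tauto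
    · have h1 : u j ≤ u i := by rw [huπ i, huπ j]; exact hHmono hle
      have h2 : u j ^ 2 ≤ u i ^ 2 := pow_le_pow_left₀ (hu0 j) h1 2
      have h3 : |u i ^ 2 - u j ^ 2| = H2 (π i) - H2 (π j) := by
        rw [abs_of_nonneg (by linarith), huπ i, huπ j]
        try simp [hH2]
      rw [h3, sub (π j) (π i) hle (hπm i)]
      all_goals
        refine Finset.sum_congr rfl fun k _ => ?_
        simp only [hind]
        split_ifs <;> first | rfl | tauto
  -- the double sum of P against the indicator is twice the cut
  have cutsum : ∀ k : ℕ, ∑ i, ∑ j, P i j * ind k i j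
      = 2 * ∑ i ∈ S (k+1), ∑ j ∈ (S (k+1))ᶜ, P i j := by
    intro k
    have hcompl : (S (k+1))ᶜ = Finset.univ.filter (fun i => ¬((k+1:ℕ) ≤ π i)) := by
      rw [hS]
      ext i
      simp
    have e1 : ∑ i ∈ S (k+1), ∑ j ∈ (S (k+1))ᶜ, P i j
        = ∑ i, ∑ j, (if ((k+1:ℕ) ≤ π i ∧ ¬((k+1:ℕ) ≤ π j)) then P i j else 0) := by
      rw [hcompl, hS, Finset.sum_filter]
      apply Finset.sum_congr rfl
      intro i _
      rw [Finset.sum_filter]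
      split
      · apply Finset.sum_congr rfl
        intro j _
        split <;> split <;> tauto
      · rw [Finset.sum_eq_zero]
        intro j _
        split <;> tauto
    have e2 : ∑ i ∈ (S (k+1))ᶜ, ∑ j ∈ S (k+1), P i j
        = ∑ i, ∑ j, (if (¬((k+1:ℕ) ≤ π i) ∧ ((k+1:ℕ) ≤ π j)) then P i j else 0) := by
      rw [hcompl, hS, Finset.sum_filter]
      apply Finset.sum_congr rfl
      intro i _
      rw [Finset.sum_filter]
      split
      · apply Finset.sum_congr rfl
        intro j _
        split <;> split <;> tauto
      · rw [Finset.sum_eq_zero]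
        intro j _
        split <;> tauto
    have e3 : ∑ i ∈ (S (k+1))ᶜ, ∑ j ∈ S (k+1), P i j
        = ∑ i ∈ S (k+1), ∑ j ∈ (S (k+1))ᶜ, P i j := by
      refine Finset.sum_comm.trans ?_
      exact Finset.sum_congr rfl fun i _ => Finset.sum_congr rfl fun j _ => hsymm j i
    have e4 : ∀ i j, P i j * ind k i j
        = (if ((k+1:ℕ) ≤ π i ∧ ¬((k+1:ℕ) ≤ π j)) then P i j else 0)
          + (if (¬((k+1:ℕ) ≤ π i) ∧ ((k+1:ℕ) ≤ π j)) then P i j else 0) := by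
      intro i j
      simp only [hind]
      by_cases h1 : (k+1:ℕ) ≤ π i <;> by_cases h2 : (k+1:ℕ) ≤ π j <;> simp [h1, h2]
    calc ∑ i, ∑ j, P i j * ind k i j
        = (∑ i, ∑ j, (if ((k+1:ℕ) ≤ π i ∧ ¬((k+1:ℕ) ≤ π j)) then P i j else 0))
          + ∑ i, ∑ j, (if (¬((k+1:ℕ) ≤ π i) ∧ ((k+1:ℕ) ≤ π j)) then P i j else 0) := by
          rw [← Finset.sum_add_distrib]
          apply Finset.sum_congr rfl
          intro i _
          rw [← Finset.sum_add_distrib]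
          exact Finset.sum_congr rfl fun j _ => e4 i j
      _ = 2 * ∑ i ∈ S (k+1), ∑ j ∈ (S (k+1))ᶜ, P i j := by
          rw [← e1, ← e2, e3]
          ring
  -- cut bound from the Cheeger hypothesis
  have cutbd : ∀ k ∈ Finset.range m,
      δ k * (2 * α * ((S (k+1)).card : ℝ)) ≤ δ k * (∑ i, ∑ j, P i j * ind k i j) := by
    intro k hk
    rcases eq_or_lt_of_le (hδ0 k) with h0 | h0
    · rw [← h0]
      simp
    · apply mul_le_mul_of_nonneg_left _ (hδ0 k)
      rw [cutsum k]
      -- S (k+1) facts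
      have hHk1 : 0 < H (k+1) := by
        have h5 : H k ^ 2 < H (k+1) ^ 2 := by
          have h6 := h0
          simp only [hδ, hH2] at h6
          linarith
        rcases (hH0' (k+1)).lt_or_eq with h | h
        · exact h
        · exfalso
          nlinarith [sq_nonneg (H k)]
      have hsubW : S (k+1) ⊆ W := by
        intro i hi
        rw [hS] at hi
        simp only [Finset.mem_filter, Finset.mem_univ, true_and] at hi
        apply hWmem
        rw [huπ i]
        exact lt_of_lt_of_le hHk1 (hHmono hi)
      have hScard : (S (k+1)).card ≤ W.card := Finset.card_le_card hsubW
      have hSne : (S (k+1)).Nonempty := by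
        refine ⟨σ ⟨m, Nat.lt_succ_self m⟩, ?_⟩
        rw [hS]
        simp only [Finset.mem_filter, Finset.mem_univ, true_and, hπ]
        simp only [Equiv.symm_apply_apply]
        simp only [Finset.mem_range] at hk
        omega
      have hSnuniv : S (k+1) ≠ Finset.univ := by
        intro h
        have : σ ⟨0, Nat.succ_pos m⟩ ∈ S (k+1) := h ▸ Finset.mem_univ _
        rw [hS] at this
        simp only [Finset.mem_filter, Finset.mem_univ, true_and, hπ,
          Equiv.symm_apply_apply] at this
        omega
      have hcompl_card : ((S (k+1))ᶜ).card = m + 1 - (S (k+1)).card := by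
        rw [Finset.card_compl, Fintype.card_fin]
      have hmin : min (S (k+1)).card ((S (k+1))ᶜ).card = (S (k+1)).card := by
        rw [hcompl_card]
        omega
      have hch := hcheeger (S (k+1)) hSne hSnuniv
      rw [← Nat.cast_min, hmin] at hch
      have hpos : (0:ℝ) < ((S (k+1)).card : ℝ) := by
        have := Finset.card_pos.mpr hSne
        exact_mod_cast this
      rw [le_div_iff₀ hpos] at hch
      calc 2 * α * ((S (k+1)).card : ℝ) = 2 * (α * (S (k+1)).card) := by ring
        _ ≤ 2 * ∑ i ∈ S (k+1), ∑ j ∈ (S (k+1))ᶜ, P i j := by linarith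
  -- layer-cake for Su
  have I2 : Su = ∑ k ∈ Finset.range m, δ k * ((S (k+1)).card : ℝ) := by
    have e1 : ∀ i : Fin (m+1), u i ^ 2
        = ∑ k ∈ Finset.range m, (if (k+1:ℕ) ≤ π i then δ k else 0) := by
      intro i
      have h1 : (Finset.range m).filter (fun k => (k+1:ℕ) ≤ π i) = Finset.range (π i) := by
        ext k
        simp only [Finset.mem_filter, Finset.mem_range]
        have := hπm i
        omega
      rw [← Finset.sum_filter, h1, hδ]
      simp only
      rw [Finset.sum_range_sub H2, hH2_0, huπ i, hH2]
      ring
    rw [hSu, Finset.sum_congr rfl fun i _ => e1 i, Finset.sum_comm]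
    apply Finset.sum_congr rfl
    intro k _
    have : ∀ i : Fin (m+1), (if (k+1:ℕ) ≤ π i then δ k else 0)
        = δ k * (if (k+1:ℕ) ≤ π i then (1:ℝ) else 0) := by
      intro i
      split <;> ring
    rw [Finset.sum_congr rfl fun i _ => this i, ← Finset.mul_sum]
    congr 1
    rw [hS, Finset.sum_boole]
    try simp
  -- put things together
  have final : ∑ i, ∑ j, P i j * |u i ^ 2 - u j ^ 2|
      = ∑ k ∈ Finset.range m, δ k * ∑ i, ∑ j, P i j * ind k i j := by
    calc ∑ i, ∑ j, P i j * |u i ^ 2 - u j ^ 2|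
        = ∑ i, ∑ j, ∑ k ∈ Finset.range m, δ k * (P i j * ind k i j) := by
          refine Finset.sum_congr rfl fun i _ => Finset.sum_congr rfl fun j _ => ?_
          rw [pair i j, Finset.mul_sum]
          exact Finset.sum_congr rfl fun k _ => by ring
      _ = ∑ i, ∑ k ∈ Finset.range m, ∑ j, δ k * (P i j * ind k i j) :=
          Finset.sum_congr rfl fun i _ => Finset.sum_comm
      _ = ∑ k ∈ Finset.range m, ∑ i, ∑ j, δ k * (P i j * ind k i j) :=
          Finset.sum_comm
      _ = ∑ k ∈ Finset.range m, δ k * ∑ i, ∑ j, P i j * ind k i j := by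
          refine Finset.sum_congr rfl fun k _ => ?_
          rw [Finset.mul_sum]
          refine Finset.sum_congr rfl fun i _ => ?_
          rw [Finset.mul_sum]
  calc 2 * α * Su = ∑ k ∈ Finset.range m, δ k * (2 * α * ((S (k+1)).card : ℝ)) := by
        rw [I2, Finset.mul_sum]
        exact Finset.sum_congr rfl fun k _ => by ring
    _ ≤ ∑ k ∈ Finset.range m, δ k * (∑ i, ∑ j, P i j * ind k i j) :=
        Finset.sum_le_sum cutbd
    _ = ∑ i, ∑ j, P i j * |u i ^ 2 - u j ^ 2| := final.symm


private lemma step3 (m : ℕ) (P : Matrix (Fin (m+1)) (Fin (m+1)) ℝ)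
    (hsymm : ∀ i j, P i j = P j i)
    (hnonneg : ∀ i j, 0 ≤ P i j)
    (hstoch : ∀ i, ∑ j, P i j = 1)
    (α : ℝ) (hα : 0 < α) (μ : ℝ)
    (u : Fin (m+1) → ℝ) (hu0 : ∀ i, 0 ≤ u i)
    (Su : ℝ) (hSu : Su = ∑ i, u i ^ 2) (hSupos : 0 < Su)
    (key1 : ∑ i, ∑ j, P i j * (u i - u j) ^ 2 ≤ 2 * (1 - μ) * Su)
    (key2 : 2 * α * Su ≤ ∑ i, ∑ j, P i j * |u i ^ 2 - u j ^ 2|) :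
    μ ≤ 1 - α ^ 2 / 2 := by
  have hcol : ∀ j, ∑ i, P i j = 1 := by
    intro j
    rw [Finset.sum_congr rfl (fun i _ => hsymm i j)]
    exact hstoch j
  have A1 : ∑ i, ∑ j, P i j * u i ^ 2 = Su := by
    rw [hSu]
    exact Finset.sum_congr rfl fun i _ => by rw [← Finset.sum_mul, hstoch, one_mul]
  have A2 : ∑ i, ∑ j, P i j * u j ^ 2 = Su := by
    rw [Finset.sum_comm, hSu]
    exact Finset.sum_congr rfl fun j _ => by rw [← Finset.sum_mul, hcol, one_mul]
  have B1 : ∑ i, ∑ j, P i j * (u i + u j) ^ 2 ≤ 4 * Su := by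
    have step : ∑ i, ∑ j, P i j * (u i + u j) ^ 2
        ≤ ∑ i, ∑ j, (2 * (P i j * u i ^ 2) + 2 * (P i j * u j ^ 2)) := by
      refine Finset.sum_le_sum fun i _ => Finset.sum_le_sum fun j _ => ?_
      nlinarith [sq_nonneg (u i - u j), hnonneg i j]
    calc ∑ i, ∑ j, P i j * (u i + u j) ^ 2
        ≤ ∑ i, ∑ j, (2 * (P i j * u i ^ 2) + 2 * (P i j * u j ^ 2)) := step
      _ = 2 * (∑ i, ∑ j, P i j * u i ^ 2) + 2 * (∑ i, ∑ j, P i j * u j ^ 2) := by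
          simp_rw [Finset.sum_add_distrib, ← Finset.mul_sum]
      _ = 4 * Su := by rw [A1, A2]; ring
  have Enn : 0 ≤ ∑ i, ∑ j, P i j * (u i - u j) ^ 2 :=
    Finset.sum_nonneg fun i _ => Finset.sum_nonneg fun j _ =>
      mul_nonneg (hnonneg i j) (sq_nonneg _)
  have Bnn : 0 ≤ ∑ i, ∑ j, P i j * (u i + u j) ^ 2 :=
    Finset.sum_nonneg fun i _ => Finset.sum_nonneg fun j _ =>
      mul_nonneg (hnonneg i j) (sq_nonneg _)
  have CS : (∑ i, ∑ j, P i j * |u i ^ 2 - u j ^ 2|) ^ 2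
      ≤ (∑ i, ∑ j, P i j * (u i - u j) ^ 2) * (∑ i, ∑ j, P i j * (u i + u j) ^ 2) := by
    have cs := Finset.sum_mul_sq_le_sq_mul_sq (Finset.univ : Finset (Fin (m+1) × Fin (m+1)))
      (fun x => Real.sqrt (P x.1 x.2) * |u x.1 - u x.2|)
      (fun x => Real.sqrt (P x.1 x.2) * (u x.1 + u x.2))
    have l1 : ∀ x : Fin (m+1) × Fin (m+1),
        (Real.sqrt (P x.1 x.2) * |u x.1 - u x.2|) * (Real.sqrt (P x.1 x.2) * (u x.1 + u x.2))
        = P x.1 x.2 * |u x.1 ^ 2 - u x.2 ^ 2| := by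
      intro x
      have hs : Real.sqrt (P x.1 x.2) * Real.sqrt (P x.1 x.2) = P x.1 x.2 :=
        Real.mul_self_sqrt (hnonneg _ _)
      have habs : |u x.1 - u x.2| * (u x.1 + u x.2) = |u x.1 ^ 2 - u x.2 ^ 2| := by
        have h1 : 0 ≤ u x.1 + u x.2 := add_nonneg (hu0 _) (hu0 _)
        rw [← abs_of_nonneg h1, ← abs_mul]
        congr 1
        ring
      calc (Real.sqrt (P x.1 x.2) * |u x.1 - u x.2|) * (Real.sqrt (P x.1 x.2) * (u x.1 + u x.2))
          = (Real.sqrt (P x.1 x.2) * Real.sqrt (P x.1 x.2)) * (|u x.1 - u x.2| * (u x.1 + u x.2)) := by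
            ring
        _ = P x.1 x.2 * |u x.1 ^ 2 - u x.2 ^ 2| := by rw [hs, habs]
    have l2 : ∀ x : Fin (m+1) × Fin (m+1),
        (Real.sqrt (P x.1 x.2) * |u x.1 - u x.2|) ^ 2 = P x.1 x.2 * (u x.1 - u x.2) ^ 2 := by
      intro x
      rw [mul_pow, sq_abs, Real.sq_sqrt (hnonneg _ _)]
    have l3 : ∀ x : Fin (m+1) × Fin (m+1),
        (Real.sqrt (P x.1 x.2) * (u x.1 + u x.2)) ^ 2 = P x.1 x.2 * (u x.1 + u x.2) ^ 2 := by
      intro x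
      rw [mul_pow, Real.sq_sqrt (hnonneg _ _)]
    rw [Finset.sum_congr rfl fun x _ => l1 x, Finset.sum_congr rfl fun x _ => l2 x,
      Finset.sum_congr rfl fun x _ => l3 x] at cs
    simp only [Fintype.sum_prod_type] at cs
    exact cs
  have F0 : 0 ≤ 2 * α * Su := by positivity
  have hsq : (2 * α * Su) ^ 2 ≤ (2 * (1 - μ) * Su) * (4 * Su) := by
    have h1 : (2 * α * Su) ^ 2 ≤ (∑ i, ∑ j, P i j * |u i ^ 2 - u j ^ 2|) ^ 2 := by
      have := key2
      nlinarith
    have h2 : (∑ i, ∑ j, P i j * (u i - u j) ^ 2) * (∑ i, ∑ j, P i j * (u i + u j) ^ 2)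
        ≤ (2 * (1 - μ) * Su) * (4 * Su) :=
      mul_le_mul key1 B1 Bnn (le_trans Enn key1)
    linarith [CS]
  nlinarith [mul_pos hSupos hSupos, hsq, sq_nonneg Su]


private lemma cheeger_aux (m : ℕ) (P : Matrix (Fin (m+1)) (Fin (m+1)) ℝ)
    (hsymm : ∀ i j, P i j = P j i)
    (hnonneg : ∀ i j, 0 ≤ P i j)
    (hstoch : ∀ i, ∑ j, P i j = 1)
    (α : ℝ) (hα : 0 < α)
    (hcheeger : ∀ S : Finset (Fin (m+1)), S.Nonempty → S ≠ Finset.univ →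
      α ≤ (∑ i ∈ S, ∑ j ∈ Sᶜ, P i j) / (min S.card Sᶜ.card : ℝ))
    (μ : ℝ) (v : Fin (m+1) → ℝ) (heig : P.mulVec v = μ • v)
    (hWne : ∃ i, 0 < v i)
    (hWcard : 2 * (Finset.univ.filter (fun i => 0 < v i)).card ≤ m + 1) :
    μ ≤ 1 - α ^ 2 / 2 := by
  set W : Finset (Fin (m+1)) := Finset.univ.filter (fun i => 0 < v i) with hW
  set u : Fin (m+1) → ℝ := fun i => max (v i) 0 with hu
  have hu0 : ∀ i, 0 ≤ u i := fun i => le_max_right _ _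
  have huv : ∀ i, v i ≤ u i := fun i => le_max_left _ _
  have huW : ∀ i, i ∈ W → u i = v i := by
    intro i hi
    simp only [hW, Finset.mem_filter] at hi
    exact max_eq_left hi.2.le
  have huW' : ∀ i, i ∉ W → u i = 0 := by
    intro i hi
    simp only [hW, Finset.mem_filter, Finset.mem_univ, true_and, not_lt] at hi
    exact max_eq_right hi
  have hWmem : ∀ i, 0 < u i → i ∈ W := by
    intro i hi
    by_contra h
    rw [huW' i h] at hi
    exact lt_irrefl 0 hi
  set Su : ℝ := ∑ i, u i ^ 2 with hSu
  obtain ⟨i₁, hi₁⟩ := hWne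
  have hi₁W : i₁ ∈ W := by simp [hW, hi₁]
  have hSupos : 0 < Su := by
    apply Finset.sum_pos' (fun i _ => sq_nonneg _) ⟨i₁, Finset.mem_univ _, ?_⟩
    have h1 : u i₁ = v i₁ := huW _ hi₁W
    rw [h1]
    positivity
  have key1 := step1 m P hsymm hnonneg hstoch μ v heig W u hu0 huv huW huW'
    (fun i => by simp [hW]) Su hSu
  have key2 := step2 m P hsymm hnonneg hstoch α hα hcheeger W u hu0 huW' hWmem
    hWcard ⟨i₁, hi₁W⟩ Su hSu
  exact step3 m P hsymm hnonneg hstoch α hα μ u hu0 Su hSu hSupos key1 key2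

/-- Cheeger bound on the second eigenvalue: any eigenvalue of `P` whose eigenvector is
orthogonal to the all-ones vector (i.e. any non-principal eigenvalue) is at most
`1 - α²/2`. -/
theorem stmt_3 (n : ℕ) (P : Matrix (Fin n) (Fin n) ℝ)
    (hsymm : ∀ i j, P i j = P j i)
    (hnonneg : ∀ i j, 0 ≤ P i j)
    (hstoch : ∀ i, ∑ j, P i j = 1)
    (α : ℝ) (hα : 0 < α)
    (hcheeger : ∀ S : Finset (Fin n), S.Nonempty → S ≠ Finset.univ →
      α ≤ (∑ i ∈ S, ∑ j ∈ Sᶜ, P i j) / (min S.card Sᶜ.card : ℝ)) :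
    ∀ (μ : ℝ) (v : Fin n → ℝ), v ≠ 0 → P.mulVec v = μ • v → (∑ i, v i) = 0 →
      μ ≤ 1 - α ^ 2 / 2 := by
  intro μ v hv heig hsum
  obtain ⟨i₀, hi₀⟩ : ∃ i, v i ≠ 0 := by
    by_contra h
    push_neg at h
    exact hv (funext h)
  rcases n with - | m
  · exact absurd (Subsingleton.elim v 0) hv
  -- both sign classes are nonempty
  have hpos : ∃ i, 0 < v i := by
    by_contra h
    push_neg at h
    have : ∀ i ∈ Finset.univ, v i = 0 := by
      intro i _
      have := Finset.sum_eq_zero_iff_of_nonpos (fun i _ => h i) |>.mp hsum i (Finset.mem_univ i)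
      exact this
    exact hi₀ (this i₀ (Finset.mem_univ _))
  have hneg : ∃ i, 0 < -v i := by
    by_contra h
    push_neg at h
    have h' : ∀ i, 0 ≤ v i := fun i => by have := h i; linarith
    have : ∀ i ∈ Finset.univ, v i = 0 := fun i _ =>
      (Finset.sum_eq_zero_iff_of_nonneg (fun i _ => h' i)).mp hsum i (Finset.mem_univ i)
    exact hi₀ (this i₀ (Finset.mem_univ _))
  set Wp : Finset (Fin (m+1)) := Finset.univ.filter (fun i => 0 < v i) with hWp
  set Wm : Finset (Fin (m+1)) := Finset.univ.filter (fun i => 0 < -v i) with hWm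
  have hdisj : Disjoint Wp Wm := by
    rw [Finset.disjoint_left]
    intro a ha ha'
    simp only [hWp, hWm, Finset.mem_filter] at ha ha'
    linarith [ha.2, ha'.2]
  have hcards : Wp.card + Wm.card ≤ m + 1 := by
    rw [← Finset.card_union_of_disjoint hdisj]
    simpa using Finset.card_le_card (Finset.subset_univ (Wp ∪ Wm))
  rcases le_or_gt (2 * Wp.card) (m+1) with hsmall | hbig
  · exact cheeger_aux m P hsymm hnonneg hstoch α hα hcheeger μ v heig hpos hsmall
  · have hsmall' : 2 * Wm.card ≤ m + 1 := by omega
    have heig' : P.mulVec (-v) = μ • (-v) := by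
      rw [Matrix.mulVec_neg, heig, smul_neg]
    exact cheeger_aux m P hsymm hnonneg hstoch α hα hcheeger μ (-v) heig'
      (by simpa using hneg) (by simpa [hWm] using hsmall')
end

section
/- Let P be a symmetric stochastic matrix on [n] with Cheeger constant χ(P) ≥ α > 0. Then the hitting time of P, HitT(P) = max_{i,j} E[min{t : X_t = j} | X_0 = i], is at most C·(n log n)/α² for an absolute constant C. -/
open BigOperators Finset

lemma harmonic_le_log : ∀ n : ℕ, ∑ r ∈ Finset.Icc 1 n, (1 / (r:ℝ)) ≤ 1 + Real.log n := by
  intro n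
  induction n with
  | zero => simp
  | succ m ih =>
    rcases Nat.eq_zero_or_pos m with hm | hm
    · subst hm; simp
    · rw [Finset.sum_Icc_succ_top (by omega : 1 ≤ m + 1)]
      have hm0 : (0:ℝ) < m := by exact_mod_cast hm
      have hm1 : (0:ℝ) < (m:ℝ) + 1 := by linarith
      have hx : (0:ℝ) < (m:ℝ)/((m:ℝ)+1) := by positivity
      have hlog := Real.log_le_sub_one_of_pos hx
      rw [Real.log_div (ne_of_gt hm0) (ne_of_gt hm1)] at hlog
      have heq : (m:ℝ)/((m:ℝ)+1) - 1 = -(1/((m:ℝ)+1)) := by field_simp; ring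
      rw [heq] at hlog
      have hcast : ((m+1 : ℕ) : ℝ) = (m:ℝ) + 1 := by push_cast; ring
      rw [hcast]
      linarith

lemma cut_lemma {n : ℕ} (P : Matrix (Fin n) (Fin n) ℝ)
    (hsym : ∀ i j, P i j = P j i) (hnn : ∀ i j, 0 ≤ P i j)
    (hrow : ∀ i, ∑ j, P i j = 1)
    (g : Fin n → ℝ) (j : Fin n)
    (hrec : ∀ i, i ≠ j → g i = 1 + ∑ k, P i k * g k)
    (S : Finset (Fin n)) (hjS : j ∉ S)
    (t M E : ℝ)
    (ht : ∀ i ∈ S, t ≤ g i) (hMax : ∀ k ∉ S, g k ≤ M)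
    (hE : E = ∑ i ∈ S, ∑ k ∈ Sᶜ, P i k) (hEpos : 0 < E) :
    t ≤ M + S.card / E := by
  set q : Fin n → ℝ := fun k => ∑ i ∈ Sᶜ, P i k with hq
  have col : ∀ k, ∑ i ∈ S, P i k = 1 - q k := by
    intro k
    have h1 : ∑ i ∈ S, P i k + ∑ i ∈ Sᶜ, P i k = ∑ i, P i k :=
      Finset.sum_add_sum_compl S _
    have h2 : ∑ i, P i k = 1 := by
      rw [Finset.sum_congr rfl (fun i _ => hsym i k)]
      exact hrow k
    simp only [hq]; linarith
  have key : ∑ k ∈ S, g k * q k = S.card + ∑ a ∈ S, ∑ k ∈ Sᶜ, P a k * g k := by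
    have e1 : ∑ a ∈ S, g a = S.card + ∑ a ∈ S, ∑ k, P a k * g k := by
      rw [Finset.sum_congr rfl (fun a ha => hrec a (fun hc => hjS (hc ▸ ha)))]
      rw [Finset.sum_add_distrib]
      simp only [Finset.sum_const, nsmul_eq_mul, mul_one]
    have e2 : ∀ a : Fin n, ∑ k, P a k * g k
        = ∑ k ∈ S, P a k * g k + ∑ k ∈ Sᶜ, P a k * g k := by
      intro a; rw [Finset.sum_add_sum_compl]
    have e3 : ∑ a ∈ S, ∑ k ∈ S, P a k * g k = ∑ k ∈ S, (1 - q k) * g k := by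
      rw [Finset.sum_comm]
      refine Finset.sum_congr rfl (fun k hk => ?_)
      rw [← Finset.sum_mul, col k]
    have e4 : ∑ k ∈ S, (1 - q k) * g k = ∑ k ∈ S, g k - ∑ k ∈ S, g k * q k := by
      rw [← Finset.sum_sub_distrib]
      exact Finset.sum_congr rfl (fun k hk => by ring)
    have := e1
    simp only [e2, Finset.sum_add_distrib, e3, e4] at this
    linarith
  have hE' : ∑ k ∈ S, q k = E := by
    rw [hE]
    simp only [hq]
    exact Finset.sum_congr rfl (fun k _ => Finset.sum_congr rfl (fun a _ => hsym a k))
  have h1 : t * E ≤ ∑ k ∈ S, g k * q k := by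
    rw [← hE', Finset.mul_sum]
    refine Finset.sum_le_sum (fun k hk => ?_)
    have hqnn : 0 ≤ q k := Finset.sum_nonneg (fun a _ => hnn a k)
    exact mul_le_mul_of_nonneg_right (ht k hk) hqnn
  have h2 : ∑ a ∈ S, ∑ k ∈ Sᶜ, P a k * g k ≤ M * E := by
    rw [hE, Finset.mul_sum]
    refine Finset.sum_le_sum (fun a _ => ?_)
    rw [Finset.mul_sum]
    refine Finset.sum_le_sum (fun k hk => ?_)
    have hk' : k ∉ S := Finset.mem_compl.mp hk
    calc P a k * g k ≤ P a k * M := mul_le_mul_of_nonneg_left (hMax k hk') (hnn a k)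
      _ = M * P a k := by ring
  have h3 : t * E ≤ S.card + M * E := by linarith
  have h4 : t ≤ (S.card + M * E) / E := by
    rw [le_div_iff₀ hEpos]; linarith
  calc t ≤ (S.card + M * E) / E := h4
    _ = M + S.card / E := by field_simp; ring

/-- Hitting-time bound: there is an absolute constant `C` such that for any symmetric
stochastic matrix `P` on `[n]` with Cheeger constant at least `α > 0`, the expected hitting
times `h j i` (characterized by the standard first-step recurrence) are all at most
`C · n · log n / α²`. -/
theorem stmt_6 :
    ∃ C : ℝ, 0 < C ∧
      ∀ (n : ℕ) (P : Matrix (Fin n) (Fin n) ℝ),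
        (∀ i j, P i j = P j i) →
        (∀ i j, 0 ≤ P i j) →
        (∀ i, ∑ j, P i j = 1) →
        ∀ α : ℝ, 0 < α →
        (∀ S : Finset (Fin n), S.Nonempty → S ≠ Finset.univ →
          α ≤ (∑ i ∈ S, ∑ j ∈ Sᶜ, P i j) / (min S.card Sᶜ.card : ℝ)) →
        ∀ h : Fin n → Fin n → ℝ,
          (∀ i j, 0 ≤ h j i) →
          (∀ j, h j j = 0) →
          (∀ i j, i ≠ j → h j i = 1 + ∑ k, P i k * h j k) →
          ∀ i j, h j i ≤ C * n * Real.log n / α ^ 2 := by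
  refine ⟨4, by norm_num, ?_⟩
  intro n P hsym hnn hrow α hα hCheeg h hpos h0 hrec i j
  rcases Nat.lt_or_ge n 2 with hn | hn
  · interval_cases n
    · exact i.elim0
    · have hij : i = j := Subsingleton.elim i j
      rw [hij, h0]
      simp
  · set g : Fin n → ℝ := fun k => h j k with hgdef
    have hg0 : g j = 0 := h0 j
    have hgnn : ∀ k, 0 ≤ g k := fun k => hpos k j
    have hrecg : ∀ a : Fin n, a ≠ j → g a = 1 + ∑ k, P a k * g k := fun a ha => hrec a j ha
    -- α ≤ 1
    have hα1 : α ≤ 1 := by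
      have hne : ({j} : Finset (Fin n)) ≠ Finset.univ := by
        intro hc
        have hcard := congrArg Finset.card hc
        simp only [Finset.card_singleton, Finset.card_univ, Fintype.card_fin] at hcard
        omega
      have hch := hCheeg {j} (Finset.singleton_nonempty j) hne
      have hcc : ({j}ᶜ : Finset (Fin n)).card = n - 1 := by
        rw [Finset.card_compl]; simp
      have hmin : min (({j} : Finset (Fin n)).card : ℝ) ((({j}ᶜ : Finset (Fin n)).card : ℕ) : ℝ) = 1 := by
        rw [Finset.card_singleton, hcc]
        have : (1:ℝ) ≤ ((n-1 : ℕ) : ℝ) := by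
          have : 1 ≤ n - 1 := by omega
          exact_mod_cast this
        simp [min_eq_left this]
      rw [hmin] at hch
      have hsum : ∑ a ∈ ({j} : Finset (Fin n)), ∑ k ∈ ({j}ᶜ : Finset (Fin n)), P a k ≤ 1 := by
        rw [Finset.sum_singleton]
        calc ∑ k ∈ ({j}ᶜ : Finset (Fin n)), P j k ≤ ∑ k, P j k :=
              Finset.sum_le_sum_of_subset_of_nonneg (Finset.subset_univ _) (fun k _ _ => hnn j k)
          _ = 1 := hrow j
      rw [div_one] at hch
      linarith
    -- definitions
    set f : ℕ → ℝ := fun r => ((n - r : ℕ) : ℝ) / ((min (n - r) r : ℕ) : ℝ) with hfdef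
    have hfnn : ∀ r, 0 ≤ f r := fun r => by
      apply div_nonneg <;> positivity
    set rank : Fin n → ℕ := fun a => (Finset.univ.filter (fun k => g k < g a)).card with hrankdef
    have base : ∀ a : Fin n, rank a = 0 → g a ≤ 0 := by
      intro a ha
      simp only [hrankdef] at ha
      have hemp : (Finset.univ.filter (fun k => g k < g a)) = ∅ := Finset.card_eq_zero.mp ha
      by_contra hc
      push_neg at hc
      have hj : j ∈ Finset.univ.filter (fun k => g k < g a) := by
        simp only [Finset.mem_filter, Finset.mem_univ, true_and, hg0]
        exact hc
      rw [hemp] at hj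
      exact absurd hj (Finset.notMem_empty j)
    have key : ∀ m : ℕ, ∀ a : Fin n, rank a ≤ m →
        g a ≤ (∑ r ∈ Finset.Icc 1 (rank a), f r) / α := by
      intro m
      induction m with
      | zero =>
        intro a ha
        have hr0 : rank a = 0 := Nat.le_zero.mp ha
        rw [hr0]
        rw [show Finset.Icc 1 0 = (∅ : Finset ℕ) by rfl, Finset.sum_empty, zero_div]
        exact base a hr0
      | succ m ih =>
        intro a ha
        rcases Nat.eq_zero_or_pos (rank a) with hr0 | hrpos
        · rw [hr0]
          rw [show Finset.Icc 1 0 = (∅ : Finset ℕ) by rfl, Finset.sum_empty, zero_div]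
          exact base a hr0
        · have hTne : (Finset.univ.filter (fun k => g k < g a)).Nonempty := by
            rw [← Finset.card_pos]
            simpa only [hrankdef] using hrpos
          obtain ⟨k, hkmem, hkmax⟩ := Finset.exists_max_image _ g hTne
          have hgk : g k < g a := (Finset.mem_filter.mp hkmem).2
          have hga_pos : 0 < g a := lt_of_le_of_lt (hgnn k) hgk
          set S : Finset (Fin n) := Finset.univ.filter (fun l => g a ≤ g l) with hSdef
          have hScompl : Sᶜ = Finset.univ.filter (fun l => g l < g a) := by
            ext l
            simp [hSdef, not_le]
          have haS : a ∈ S := by simp [hSdef]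
          have hkS : k ∉ S := by
            simp only [hSdef, Finset.mem_filter, Finset.mem_univ, true_and, not_le]
            exact hgk
          have hSne : S.Nonempty := ⟨a, haS⟩
          have hSnu : S ≠ Finset.univ := by
            intro hc
            exact hkS (hc ▸ Finset.mem_univ k)
          have hjS : j ∉ S := by
            simp only [hSdef, Finset.mem_filter, Finset.mem_univ, true_and, hg0, not_le]
            exact hga_pos
          have hch := hCheeg S hSne hSnu
          set E : ℝ := ∑ x ∈ S, ∑ y ∈ Sᶜ, P x y with hEdef
          have hScard : 0 < S.card := Finset.card_pos.mpr hSne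
          have hSccard : 0 < Sᶜ.card := Finset.card_pos.mpr ⟨k, Finset.mem_compl.mpr hkS⟩
          have hminpos : (0:ℝ) < min (S.card : ℝ) (Sᶜ.card : ℝ) := by
            apply lt_min
            · exact_mod_cast hScard
            · exact_mod_cast hSccard
          have hElb : α * min (S.card : ℝ) (Sᶜ.card : ℝ) ≤ E := by
            rw [← le_div_iff₀ hminpos]
            exact hch
          have hEpos : 0 < E := lt_of_lt_of_le (by positivity) hElb
          have hcut := cut_lemma P hsym hnn hrow g j hrecg S hjS (g a) (g k) E
            (fun l hl => by
              simp only [hSdef, Finset.mem_filter, Finset.mem_univ, true_and] at hl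
              exact hl)
            (fun l hl => hkmax l (by
              simp only [hSdef, Finset.mem_filter, Finset.mem_univ, true_and, not_le] at hl
              simp only [Finset.mem_filter, Finset.mem_univ, true_and]
              exact hl))
            hEdef hEpos
          obtain ⟨r', hr'⟩ : ∃ r', rank a = r' + 1 := ⟨rank a - 1, by omega⟩
          have hsub : Finset.univ.filter (fun l => g l < g k) ⊆
              (Finset.univ.filter (fun l => g l < g a)).erase k := by
            intro l hl
            simp only [Finset.mem_filter, Finset.mem_univ, true_and] at hl
            rw [Finset.mem_erase]
            refine ⟨fun hc => by rw [hc] at hl; exact lt_irrefl _ hl, ?_⟩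
            simp only [Finset.mem_filter, Finset.mem_univ, true_and]
            exact lt_trans hl hgk
          have hrk : rank k ≤ r' := by
            have h1 := Finset.card_le_card hsub
            rw [Finset.card_erase_of_mem hkmem] at h1
            have h2 : rank a = (Finset.univ.filter (fun l => g l < g a)).card := by
              simp only [hrankdef]
            simp only [hrankdef]
            omega
          have hgkb := ih k (by omega)
          have hmono : ∑ r ∈ Finset.Icc 1 (rank k), f r ≤ ∑ r ∈ Finset.Icc 1 r', f r :=
            Finset.sum_le_sum_of_subset_of_nonneg
              (Finset.Icc_subset_Icc_right hrk) (fun r _ _ => hfnn r)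
          have hcompl_card : Sᶜ.card = rank a := by
            rw [hScompl]
          have hcard_sum : S.card + Sᶜ.card = n := by
            rw [Finset.card_add_card_compl, Fintype.card_fin]
          have hScard_eq : S.card = n - rank a := by omega
          have hfra : (S.card : ℝ) / E ≤ f (rank a) / α := by
            have hfeq : f (rank a) = (S.card : ℝ) / ((min S.card Sᶜ.card : ℕ) : ℝ) := by
              simp only [hfdef]
              rw [← hScard_eq, ← hcompl_card]
            have hminℕ : ((min S.card Sᶜ.card : ℕ) : ℝ) = min (S.card : ℝ) (Sᶜ.card : ℝ) := by
              push_cast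
              rfl
            rw [hfeq, hminℕ, div_div, div_le_div_iff₀ hEpos (mul_pos hminpos hα)]
            calc (S.card : ℝ) * ((min (S.card : ℝ) (Sᶜ.card : ℝ)) * α)
                = (S.card : ℝ) * (α * min (S.card : ℝ) (Sᶜ.card : ℝ)) := by ring
              _ ≤ (S.card : ℝ) * E := mul_le_mul_of_nonneg_left hElb (Nat.cast_nonneg _)
          calc g a ≤ g k + (S.card : ℝ) / E := hcut
            _ ≤ (∑ r ∈ Finset.Icc 1 r', f r) / α + f (rank a) / α := by
                refine add_le_add (le_trans hgkb ?_) hfra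
                exact div_le_div_of_nonneg_right hmono hα.le
            _ = (∑ r ∈ Finset.Icc 1 r', f r + f (r' + 1)) / α := by
                rw [hr', ← add_div]
            _ = (∑ r ∈ Finset.Icc 1 (rank a), f r) / α := by
                rw [hr', Finset.sum_Icc_succ_top (by omega : 1 ≤ r' + 1)]
    -- rank i ≤ n - 1
    have hrank_le : rank i ≤ n - 1 := by
      have hsub : Finset.univ.filter (fun k => g k < g i) ⊆ Finset.univ.erase i := by
        intro l hl
        simp only [Finset.mem_filter, Finset.mem_univ, true_and] at hl
        exact Finset.mem_erase.mpr ⟨fun hc => by rw [hc] at hl; exact lt_irrefl _ hl,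
          Finset.mem_univ l⟩
      have h1 := Finset.card_le_card hsub
      rw [Finset.card_erase_of_mem (Finset.mem_univ i), Finset.card_univ, Fintype.card_fin] at h1
      simpa only [hrankdef] using h1
    have hmain := key (rank i) i le_rfl
    have hmono : ∑ r ∈ Finset.Icc 1 (rank i), f r ≤ ∑ r ∈ Finset.Icc 1 (n-1), f r :=
      Finset.sum_le_sum_of_subset_of_nonneg
        (Finset.Icc_subset_Icc_right hrank_le) (fun r _ _ => hfnn r)
    -- bound each f r
    have hfb : ∀ r ∈ Finset.Icc 1 (n-1), f r ≤ 1 + (n:ℝ) * (1/(r:ℝ)) := by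
      intro r hr
      simp only [Finset.mem_Icc] at hr
      obtain ⟨hr1, hr2⟩ := hr
      have hnr1 : 1 ≤ n - r := by omega
      have hrpos : (0:ℝ) < (r:ℝ) := by exact_mod_cast hr1
      have hnrpos : (0:ℝ) < ((n - r : ℕ) : ℝ) := by exact_mod_cast hnr1
      rcases Nat.le_total (n - r) r with hc | hc
      · have hmin : min (n-r) r = n - r := min_eq_left hc
        have : f r = 1 := by
          simp only [hfdef, hmin]
          exact div_self (ne_of_gt hnrpos)
        rw [this]
        have : (0:ℝ) ≤ (n:ℝ)*(1/(r:ℝ)) := by positivity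
        linarith
      · have hmin : min (n-r) r = r := min_eq_right hc
        have hfr : f r = ((n - r : ℕ):ℝ) / (r:ℝ) := by simp only [hfdef, hmin]
        rw [hfr]
        have hle : ((n - r : ℕ):ℝ) ≤ (n:ℝ) := by exact_mod_cast Nat.sub_le n r
        calc ((n-r:ℕ):ℝ) / (r:ℝ) ≤ (n:ℝ)/(r:ℝ) := div_le_div_of_nonneg_right hle hrpos.le
          _ = (n:ℝ)*(1/(r:ℝ)) := by ring
          _ ≤ 1 + (n:ℝ)*(1/(r:ℝ)) := by linarith
    have hsumb : ∑ r ∈ Finset.Icc 1 (n-1), f r ≤ ((n-1:ℕ):ℝ) + (n:ℝ) * (1 + Real.log (n-1:ℕ)) := by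
      calc ∑ r ∈ Finset.Icc 1 (n-1), f r ≤ ∑ r ∈ Finset.Icc 1 (n-1), (1 + (n:ℝ)*(1/(r:ℝ))) :=
            Finset.sum_le_sum hfb
        _ = ((Finset.Icc 1 (n-1)).card : ℝ) + (n:ℝ) * ∑ r ∈ Finset.Icc 1 (n-1), (1/(r:ℝ)) := by
            rw [Finset.sum_add_distrib, ← Finset.mul_sum]
            simp only [Finset.sum_const, nsmul_eq_mul, mul_one]
        _ ≤ ((n-1:ℕ):ℝ) + (n:ℝ) * (1 + Real.log (n-1:ℕ)) := by
            rw [Nat.card_Icc]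
            have := harmonic_le_log (n-1)
            have hnn' : (0:ℝ) ≤ (n:ℝ) := Nat.cast_nonneg n
            have hcard : ((n - 1 + 1 - 1 : ℕ):ℝ) = ((n-1:ℕ):ℝ) := by norm_num
            rw [hcard]
            nlinarith [this]
    have hlogmono : Real.log ((n-1:ℕ):ℝ) ≤ Real.log (n:ℝ) := by
      apply Real.log_le_log (by exact_mod_cast (by omega : 0 < n - 1))
      exact_mod_cast Nat.sub_le n 1
    have hn2 : (2:ℝ) ≤ (n:ℝ) := by exact_mod_cast hn
    have hlog2 : Real.log 2 ≤ Real.log (n:ℝ) := by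
      apply Real.log_le_log (by norm_num) hn2
    have hl23 : (2:ℝ)/3 ≤ Real.log 2 := by
      have := Real.log_two_gt_d9
      linarith
    have hlogn : (2:ℝ)/3 ≤ Real.log (n:ℝ) := le_trans hl23 hlog2
    have hnm1 : ((n-1:ℕ):ℝ) ≤ (n:ℝ) - 1 := by
      push_cast [Nat.cast_sub (by omega : 1 ≤ n)]
      linarith
    have hfinal : ∑ r ∈ Finset.Icc 1 (n-1), f r ≤ 4 * (n:ℝ) * Real.log (n:ℝ) := by
      have step : ∑ r ∈ Finset.Icc 1 (n-1), f r ≤ ((n:ℝ) - 1) + (n:ℝ) * (1 + Real.log (n:ℝ)) := by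
        calc ∑ r ∈ Finset.Icc 1 (n-1), f r ≤ ((n-1:ℕ):ℝ) + (n:ℝ) * (1 + Real.log (n-1:ℕ)) := hsumb
          _ ≤ ((n:ℝ) - 1) + (n:ℝ) * (1 + Real.log (n:ℝ)) := by
              have hnn' : (0:ℝ) ≤ (n:ℝ) := Nat.cast_nonneg n
              nlinarith [hlogmono, hnm1]
      have : ((n:ℝ) - 1) + (n:ℝ) * (1 + Real.log (n:ℝ)) ≤ 4 * (n:ℝ) * Real.log (n:ℝ) := by
        nlinarith [hlogn, hn2]
      linarith
    -- combine everything
    have hgi : g i ≤ 4 * (n:ℝ) * Real.log (n:ℝ) / α := by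
      calc g i ≤ (∑ r ∈ Finset.Icc 1 (rank i), f r) / α := hmain
        _ ≤ (4 * (n:ℝ) * Real.log (n:ℝ)) / α :=
            div_le_div_of_nonneg_right (le_trans hmono hfinal) hα.le
    have hstep : 4 * (n:ℝ) * Real.log (n:ℝ) / α ≤ 4 * (n:ℝ) * Real.log (n:ℝ) / α ^ 2 := by
      rw [div_le_div_iff₀ hα (by positivity)]
      have hNnn : (0:ℝ) ≤ 4 * (n:ℝ) * Real.log (n:ℝ) := by nlinarith [hlogn, hn2]
      exact mul_le_mul_of_nonneg_left (by nlinarith : α ^ 2 ≤ α) hNnn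
    show g i ≤ 4 * (n:ℝ) * Real.log (n:ℝ) / α ^ 2
    linarith
end

section
/- Let P and Q be symmetric stochastic matrices on [n] with 1 − ρ(Sq(P,Q)) ≥ ε, where Sq(P,Q)_{ij} = √(P_{ij}Q_{ij}) and ρ denotes the largest eigenvalue. If T ⊆ [n] satisfies Σ_{i,j∈T} P_{ij} ≥ (1 − ε/16)|T|, then the distributions Dist(T,P) and Dist(T,Q) satisfy d_Hel²(Dist(T,P), Dist(T,Q)) ≥ ε²/32. -/
set_option maxHeartbeats 1000000


open BigOperators

/-- The distribution `Dist(T, P)` on `(T × T) ∪ {η}`: the pair `(i,j)` gets mass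
`P i j / |T|`, and the extra symbol `η` (encoded as `none`) gets the remaining mass. -/
noncomputable def distT (n : ℕ) (P : Matrix (Fin n) (Fin n) ℝ) (T : Finset (Fin n)) :
    Option ({x // x ∈ T} × {x // x ∈ T}) → ℝ
  | some (i, j) => P i j / T.card
  | none => 1 - (∑ i : {x // x ∈ T}, ∑ j : {x // x ∈ T}, P (i : Fin n) j) / T.card

/-- If `Dist(P,Q) = 1 - ρ(Sq(P,Q)) ≥ ε` (the largest-eigenvalue bound is stated via the
Rayleigh quotient of the symmetric matrix `Sq(P,Q)`) and `T` retains most of the mass of `P`,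
then `Dist(T,P)` and `Dist(T,Q)` are far in squared Hellinger distance. -/
theorem stmt_11 (n : ℕ) (P Q : Matrix (Fin n) (Fin n) ℝ)
    (hPsymm : ∀ i j, P i j = P j i) (hQsymm : ∀ i j, Q i j = Q j i)
    (hPnonneg : ∀ i j, 0 ≤ P i j) (hQnonneg : ∀ i j, 0 ≤ Q i j)
    (hPstoch : ∀ i, ∑ j, P i j = 1) (hQstoch : ∀ i, ∑ j, Q i j = 1)
    (ε : ℝ) (hε : 0 < ε)
    (hρ : ∀ v : Fin n → ℝ, ∑ i, (v i) ^ 2 = 1 →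
      ∑ i, ∑ j, v i * Real.sqrt (P i j * Q i j) * v j ≤ 1 - ε)
    (T : Finset (Fin n)) (hT : T.Nonempty)
    (hTmass : (1 - ε / 16) * T.card ≤ ∑ i ∈ T, ∑ j ∈ T, P i j) :
    ε ^ 2 / 32 ≤ (1 / 2) * ∑ x : Option ({x // x ∈ T} × {x // x ∈ T}),
      (Real.sqrt (distT n P T x) - Real.sqrt (distT n Q T x)) ^ 2 := by
  classical
  have hl0 : 0 < (T.card : ℝ) := by exact_mod_cast Finset.card_pos.mpr hT
  set l : ℝ := (T.card : ℝ) with hl_def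
  set sP : ℝ := ∑ i ∈ T, ∑ j ∈ T, P i j with hsP_def
  set sQ : ℝ := ∑ i ∈ T, ∑ j ∈ T, Q i j with hsQ_def
  set S : ℝ := ∑ i ∈ T, ∑ j ∈ T, Real.sqrt (P i j * Q i j) with hS_def
  have hsP0 : 0 ≤ sP := Finset.sum_nonneg fun i _ => Finset.sum_nonneg fun j _ => hPnonneg i j
  have hsQ0 : 0 ≤ sQ := Finset.sum_nonneg fun i _ => Finset.sum_nonneg fun j _ => hQnonneg i j
  have hS0 : 0 ≤ S := Finset.sum_nonneg fun i _ => Finset.sum_nonneg fun j _ =>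
    Real.sqrt_nonneg _
  have hsPl : sP ≤ l := by
    calc sP ≤ ∑ i ∈ T, ∑ j, P i j := Finset.sum_le_sum fun i _ =>
          Finset.sum_le_sum_of_subset_of_nonneg (Finset.subset_univ T)
            (fun j _ _ => hPnonneg i j)
      _ = l := by simp [hPstoch]; rfl
  have hsQl : sQ ≤ l := by
    calc sQ ≤ ∑ i ∈ T, ∑ j, Q i j := Finset.sum_le_sum fun i _ =>
          Finset.sum_le_sum_of_subset_of_nonneg (Finset.subset_univ T)
            (fun j _ _ => hQnonneg i j)
      _ = l := by simp [hQstoch]; rfl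
  set a : ℝ := 1 - sP / l with ha_def
  set b : ℝ := 1 - sQ / l with hb_def
  have ha0 : 0 ≤ a := by
    have := div_le_one_of_le₀ hsPl hl0.le; simp only [ha_def]; linarith
  have hb0 : 0 ≤ b := by
    have := div_le_one_of_le₀ hsQl hl0.le; simp only [hb_def]; linarith
  have ha1 : a ≤ 1 := by
    have := div_nonneg hsP0 hl0.le; simp only [ha_def]; linarith
  have hb1 : b ≤ 1 := by
    have := div_nonneg hsQ0 hl0.le; simp only [hb_def]; linarith
  have ha : a ≤ ε / 16 := by
    have h1 : (1 - ε / 16) ≤ sP / l := by rw [le_div_iff₀ hl0]; exact hTmass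
    simp only [ha_def]; linarith
  have hε1 : ε ≤ 1 := by
    obtain ⟨i0, _⟩ := hT
    have h := hρ (fun j => if j = i0 then 1 else 0) (by simp)
    have h2 : (0:ℝ) ≤ ∑ i, ∑ j, (if i = i0 then (1:ℝ) else 0) *
        Real.sqrt (P i j * Q i j) * (if j = i0 then 1 else 0) := by
      refine Finset.sum_nonneg fun i _ => Finset.sum_nonneg fun j _ => ?_
      have := Real.sqrt_nonneg (P i j * Q i j)
      positivity
    linarith
  -- Rayleigh bound: S / l ≤ 1 - ε
  have hA1 : S / l ≤ 1 - ε := by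
    have hsq : ∀ i : Fin n, ((if i ∈ T then 1 / Real.sqrt l else 0):ℝ)^2
        = if i ∈ T then 1/l else 0 := fun i => by
      split <;> simp [div_pow, Real.sq_sqrt hl0.le]
    have hv : ∑ i, ((fun i => if i ∈ T then 1 / Real.sqrt l else 0) i) ^ 2 = 1 := by
      simp only [hsq]
      rw [Finset.sum_ite_mem, Finset.univ_inter, Finset.sum_const, nsmul_eq_mul]
      field_simp
      exact hl_def.symm
    have h := hρ _ hv
    have hmul : ∀ x : ℝ, 1 / Real.sqrt l * x * (1 / Real.sqrt l) = x / l := by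
      intro x
      rw [mul_comm (1 / Real.sqrt l) x, mul_assoc, div_mul_div_comm, one_mul,
        Real.mul_self_sqrt hl0.le, mul_one_div]
    have heq : ∑ i, ∑ j, (if i ∈ T then 1 / Real.sqrt l else 0) *
        Real.sqrt (P i j * Q i j) * (if j ∈ T then 1 / Real.sqrt l else 0) = S / l := by
      rw [← Finset.sum_subset (Finset.subset_univ T)
        (fun i _ hi => by simp [if_neg hi])]
      rw [hS_def, Finset.sum_div]
      refine Finset.sum_congr rfl fun i hi => ?_
      rw [← Finset.sum_subset (Finset.subset_univ T)
        (fun j _ hj => by simp [if_neg hj])]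
      rw [Finset.sum_div]
      refine Finset.sum_congr rfl fun j hj => ?_
      rw [if_pos hi, if_pos hj, hmul]
    rw [heq] at h
    exact h
  -- Cauchy–Schwarz: S / l ≤ √(1-a) √(1-b)
  have hA2 : S / l ≤ Real.sqrt (1 - a) * Real.sqrt (1 - b) := by
    have hcs : S ^ 2 ≤ sP * sQ := by
      have h1 : S = ∑ p ∈ T ×ˢ T, Real.sqrt (P p.1 p.2 * Q p.1 p.2) := by
        rw [hS_def, Finset.sum_product]
      have h2 : sP = ∑ p ∈ T ×ˢ T, P p.1 p.2 := by rw [hsP_def, Finset.sum_product]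
      have h3 : sQ = ∑ p ∈ T ×ˢ T, Q p.1 p.2 := by rw [hsQ_def, Finset.sum_product]
      rw [h1, h2, h3]
      exact Finset.sum_sq_le_sum_mul_sum_of_sq_eq_mul _
        (fun p _ => hPnonneg p.1 p.2) (fun p _ => hQnonneg p.1 p.2)
        (fun p _ => Real.sq_sqrt (mul_nonneg (hPnonneg p.1 p.2) (hQnonneg p.1 p.2)))
    have hS' : S ≤ Real.sqrt sP * Real.sqrt sQ := by
      rw [← Real.sqrt_mul hsP0]
      exact (Real.le_sqrt hS0 (mul_nonneg hsP0 hsQ0)).mpr hcs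
    have h1a : (1:ℝ) - a = sP / l := by rw [ha_def]; ring
    have h1b : (1:ℝ) - b = sQ / l := by rw [hb_def]; ring
    rw [h1a, h1b, Real.sqrt_div' sP hl0.le, Real.sqrt_div' sQ hl0.le,
      div_mul_div_comm, Real.mul_self_sqrt hl0.le]
    gcongr
  -- Hellinger sum identity
  have hkey : (1 / 2) * ∑ x : Option ({x // x ∈ T} × {x // x ∈ T}),
      (Real.sqrt (distT n P T x) - Real.sqrt (distT n Q T x)) ^ 2
      = 1 - Real.sqrt a * Real.sqrt b - S / l := by
    have hsub : ∀ R : Matrix (Fin n) (Fin n) ℝ,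
        (∑ i : {x // x ∈ T}, ∑ j : {x // x ∈ T}, R (i : Fin n) j)
          = ∑ i ∈ T, ∑ j ∈ T, R i j := by
      intro R
      calc (∑ i : {x // x ∈ T}, ∑ j : {x // x ∈ T}, R (i : Fin n) j)
          = ∑ i : {x // x ∈ T}, ∑ j ∈ T, R (i : Fin n) j :=
            Finset.sum_congr rfl fun i _ => Finset.sum_coe_sort T (R i)
        _ = ∑ i ∈ T, ∑ j ∈ T, R i j :=
            Finset.sum_coe_sort T (fun i => ∑ j ∈ T, R i j)
    have hnoneP : distT n P T none = a := by
      show 1 - (∑ i : {x // x ∈ T}, ∑ j : {x // x ∈ T}, P (i : Fin n) j) / (T.card : ℝ) = a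
      rw [hsub P, ha_def]
    have hnoneQ : distT n Q T none = b := by
      show 1 - (∑ i : {x // x ∈ T}, ∑ j : {x // x ∈ T}, Q (i : Fin n) j) / (T.card : ℝ) = b
      rw [hsub Q, hb_def]
    rw [Fintype.sum_option, hnoneP, hnoneQ]
    have hps : ∑ x : {x // x ∈ T} × {x // x ∈ T},
        (Real.sqrt (distT n P T (some x)) - Real.sqrt (distT n Q T (some x))) ^ 2
        = ∑ i ∈ T, ∑ j ∈ T, (P i j / l + Q i j / l - 2 * (Real.sqrt (P i j * Q i j) / l)) := by
      rw [Fintype.sum_prod_type]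
      calc (∑ i : {x // x ∈ T}, ∑ j : {x // x ∈ T},
            (Real.sqrt (distT n P T (some (i, j))) - Real.sqrt (distT n Q T (some (i, j)))) ^ 2)
          = ∑ i : {x // x ∈ T}, ∑ j : {x // x ∈ T},
            (fun (i j : Fin n) => (Real.sqrt (P i j / l) - Real.sqrt (Q i j / l)) ^ 2)
              (i : Fin n) (j : Fin n) := rfl
        _ = ∑ i ∈ T, ∑ j ∈ T, (Real.sqrt (P i j / l) - Real.sqrt (Q i j / l)) ^ 2 := by
            exact hsub (fun i j => (Real.sqrt (P i j / l) - Real.sqrt (Q i j / l)) ^ 2)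
        _ = ∑ i ∈ T, ∑ j ∈ T, (P i j / l + Q i j / l - 2 * (Real.sqrt (P i j * Q i j) / l)) := by
            refine Finset.sum_congr rfl fun i _ => Finset.sum_congr rfl fun j _ => ?_
            have hp := hPnonneg i j
            have hq := hQnonneg i j
            rw [Real.sqrt_div' (P i j) hl0.le, Real.sqrt_div' (Q i j) hl0.le,
              div_sub_div_same, div_pow, Real.sq_sqrt hl0.le, sub_sq,
              Real.sq_sqrt hp, Real.sq_sqrt hq, Real.sqrt_mul hp]
            ring
    rw [hps]
    have hsplit : ∑ i ∈ T, ∑ j ∈ T,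
        (P i j / l + Q i j / l - 2 * (Real.sqrt (P i j * Q i j) / l))
        = sP / l + sQ / l - 2 * (S / l) := by
      rw [hsP_def, hsQ_def, hS_def]
      simp only [Finset.sum_sub_distrib, Finset.sum_add_distrib, ← Finset.sum_div,
        ← Finset.mul_sum]
    rw [hsplit, sub_sq, Real.sq_sqrt ha0, Real.sq_sqrt hb0, ha_def, hb_def]
    ring
  rw [hkey]
  have hεsq : ε ^ 2 ≤ ε := by nlinarith
  rcases le_or_gt b (ε / 2) with hbc | hbc
  · -- small b: use √a√b ≤ ε/4 and S/l ≤ 1 - ε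
    have hab : a * b ≤ (ε / 4) ^ 2 := by nlinarith [mul_le_mul ha hbc hb0 (by positivity : (0:ℝ) ≤ ε / 16)]
    have h1 : Real.sqrt a * Real.sqrt b ≤ ε / 4 := by
      rw [← Real.sqrt_mul ha0]
      calc Real.sqrt (a * b) ≤ Real.sqrt ((ε / 4) ^ 2) := Real.sqrt_le_sqrt hab
        _ = ε / 4 := Real.sqrt_sq (by positivity)
    nlinarith [hA1]
  · -- large b
    have hwb : Real.sqrt (ε / 2) ≤ Real.sqrt b := Real.sqrt_le_sqrt hbc.le
    have hua : Real.sqrt a ≤ Real.sqrt (ε / 16) := Real.sqrt_le_sqrt ha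
    have h16 : Real.sqrt (ε / 16) = Real.sqrt ε / 4 := by
      rw [show (16:ℝ) = 4 ^ 2 by norm_num, Real.sqrt_div' ε (by positivity),
        Real.sqrt_sq (by norm_num : (0:ℝ) ≤ 4)]
    have hsqrt2 : Real.sqrt 2 ≤ 2 := by
      nlinarith [Real.sq_sqrt (show (0:ℝ) ≤ 2 by norm_num), Real.sqrt_nonneg 2]
    have h2' : Real.sqrt ε / 2 ≤ Real.sqrt (ε / 2) := by
      rw [Real.sqrt_div' ε (by norm_num : (0:ℝ) ≤ 2)]
      apply div_le_div_of_nonneg_left (Real.sqrt_nonneg ε) _ hsqrt2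
      positivity
    have hdiff : Real.sqrt ε / 4 ≤ Real.sqrt b - Real.sqrt a := by
      rw [h16] at hua
      linarith
    have hsq : (Real.sqrt ε / 4) ^ 2 ≤ (Real.sqrt b - Real.sqrt a) ^ 2 := by
      have h0 : (0:ℝ) ≤ Real.sqrt ε / 4 := by positivity
      nlinarith
    nlinarith [hA2, hsq, sq_nonneg (Real.sqrt (1 - a) - Real.sqrt (1 - b)),
      Real.sq_sqrt ha0, Real.sq_sqrt hb0, Real.sq_sqrt (sub_nonneg.mpr ha1),
      Real.sq_sqrt (sub_nonneg.mpr hb1), Real.sq_sqrt hε.le]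
end

section
/- In Case 1 of Lemma (Hellinger bound): if P, Q are symmetric stochastic, 1 − ρ(Sq(P,Q)) ≥ ε, T satisfies Σ_{i,j∈T}P_{ij} ≥ (1−ε/16)|T| and Σ_{i,j∈T}Q_{ij} ≥ (1 − 5ε/16)|T|, then d_Hel²(Dist(T,P),Dist(T,Q)) ≥ ε/2. -/
open BigOperators

/-- If `Dist(P,Q) = 1 - ρ(Sq(P,Q)) ≥ ε` (the largest-eigenvalue bound is stated via the
Rayleigh quotient of the symmetric matrix `Sq(P,Q)`) and `T` retains most of the mass of `P`,
then `Dist(T,P)` and `Dist(T,Q)` are far in squared Hellinger distance. -/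
theorem stmt_12 (n : ℕ) (P Q : Matrix (Fin n) (Fin n) ℝ)
    (hPsymm : ∀ i j, P i j = P j i) (hQsymm : ∀ i j, Q i j = Q j i)
    (hPnonneg : ∀ i j, 0 ≤ P i j) (hQnonneg : ∀ i j, 0 ≤ Q i j)
    (hPstoch : ∀ i, ∑ j, P i j = 1) (hQstoch : ∀ i, ∑ j, Q i j = 1)
    (ε : ℝ) (hε : 0 < ε)
    (hρ : ∀ v : Fin n → ℝ, ∑ i, (v i) ^ 2 = 1 →
      ∑ i, ∑ j, v i * Real.sqrt (P i j * Q i j) * v j ≤ 1 - ε)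
    (T : Finset (Fin n)) (hT : T.Nonempty)
    (hTmass : (1 - ε / 16) * T.card ≤ ∑ i ∈ T, ∑ j ∈ T, P i j)
    (hTmassQ : (1 - 5 * ε / 16) * T.card ≤ ∑ i ∈ T, ∑ j ∈ T, Q i j) :
    ε / 2 ≤ (1 / 2) * ∑ x : Option ({x // x ∈ T} × {x // x ∈ T}),
      (Real.sqrt (distT n P T x) - Real.sqrt (distT n Q T x)) ^ 2 := by
  set c : ℝ := (T.card : ℝ) with hcdef
  have hc : 0 < c := by rw [hcdef] ; exact_mod_cast hT.card_pos
  have hsub : ∀ (M : Matrix (Fin n) (Fin n) ℝ),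
      (∑ i : {x // x ∈ T}, ∑ j : {x // x ∈ T}, M (i : Fin n) j) = ∑ i ∈ T, ∑ j ∈ T, M i j := by
    intro M
    simp only [Finset.sum_coe_sort]
    exact Finset.sum_coe_sort T (fun i => ∑ j ∈ T, M i j)
  set A : ℝ := ∑ i ∈ T, ∑ j ∈ T, P i j with hAdef
  set B : ℝ := ∑ i ∈ T, ∑ j ∈ T, Q i j with hBdef
  set R : ℝ := ∑ i ∈ T, ∑ j ∈ T, Real.sqrt (P i j * Q i j) with hRdef
  have hmass_le : ∀ (M : Matrix (Fin n) (Fin n) ℝ), (∀ i j, 0 ≤ M i j) → (∀ i, ∑ j, M i j = 1) →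
      (∑ i ∈ T, ∑ j ∈ T, M i j) ≤ c := by
    intro M hnn hst
    calc ∑ i ∈ T, ∑ j ∈ T, M i j ≤ ∑ i ∈ T, ∑ j, M i j := by
          apply Finset.sum_le_sum
          intro i _
          exact Finset.sum_le_sum_of_subset_of_nonneg (Finset.subset_univ T)
            (fun j _ _ => hnn i j)
      _ = c := by
          rw [Finset.sum_congr rfl (fun i _ => hst i), Finset.sum_const, nsmul_eq_mul, mul_one]
  have hA_le : A ≤ c := hmass_le P hPnonneg hPstoch
  have hB_le : B ≤ c := hmass_le Q hQnonneg hQstoch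
  have hPnone : distT n P T none = 1 - A / c := by
    simp only [distT] ; rw [hsub P]
  have hQnone : distT n Q T none = 1 - B / c := by
    simp only [distT] ; rw [hsub Q]
  have hPn0 : 0 ≤ 1 - A / c := by
    have := div_le_one_of_le₀ hA_le hc.le
    linarith
  have hQn0 : 0 ≤ 1 - B / c := by
    have := div_le_one_of_le₀ hB_le hc.le
    linarith
  have hdP : ∀ x, 0 ≤ distT n P T x := by
    rintro (_ | ⟨i, j⟩)
    · rw [hPnone] ; exact hPn0
    · exact div_nonneg (hPnonneg i j) hc.le
  have hdQ : ∀ x, 0 ≤ distT n Q T x := by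
    rintro (_ | ⟨i, j⟩)
    · rw [hQnone] ; exact hQn0
    · exact div_nonneg (hQnonneg i j) hc.le
  -- total mass is 1
  have hsum1 : ∀ (M : Matrix (Fin n) (Fin n) ℝ),
      ∑ x : Option ({x // x ∈ T} × {x // x ∈ T}), distT n M T x = 1 := by
    intro M
    rw [Fintype.sum_option]
    have : ∑ x : {x // x ∈ T} × {x // x ∈ T}, distT n M T (some x)
        = (∑ i : {x // x ∈ T}, ∑ j : {x // x ∈ T}, M (i : Fin n) j) / c := by
      rw [Fintype.sum_prod_type]
      simp only [distT]
      rw [Finset.sum_div]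
      exact Finset.sum_congr rfl (fun i _ => by rw [Finset.sum_div])
    rw [this]
    simp [distT]
    rw [← hcdef]; ring
  -- Rayleigh quotient bound
  have hRc : R / c ≤ 1 - ε := by
    set v : Fin n → ℝ := fun i => if i ∈ T then (Real.sqrt c)⁻¹ else 0 with hvdef
    have hsc : Real.sqrt c * Real.sqrt c = c := Real.mul_self_sqrt hc.le
    have hv2 : ∑ i, (v i) ^ 2 = 1 := by
      have h1 : ∀ i : Fin n, (v i) ^ 2 = if i ∈ T then c⁻¹ else 0 := by
        intro i
        by_cases h : i ∈ T <;> simp [hvdef, h, pow_two, ← mul_inv, hsc]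
      rw [Finset.sum_congr rfl (fun i _ => h1 i), Finset.sum_ite_mem,
        Finset.univ_inter, Finset.sum_const, nsmul_eq_mul]
      field_simp
      exact hcdef.symm
    have key := hρ v hv2
    have heq : ∑ i, ∑ j, v i * Real.sqrt (P i j * Q i j) * v j = R / c := by
      rw [← Finset.sum_subset (Finset.subset_univ T)
        (fun i _ hi => by simp [hvdef, hi])]
      rw [hRdef, Finset.sum_div]
      refine Finset.sum_congr rfl (fun i hi => ?_)
      rw [← Finset.sum_subset (Finset.subset_univ T)
        (fun j _ hj => by simp [hvdef, hj])]
      rw [Finset.sum_div]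
      refine Finset.sum_congr rfl (fun j hj => ?_)
      simp only [hvdef, if_pos hi, if_pos hj]
      rw [div_eq_mul_inv, show (Real.sqrt c)⁻¹ * Real.sqrt (P i j * Q i j) * (Real.sqrt c)⁻¹
        = Real.sqrt (P i j * Q i j) * ((Real.sqrt c)⁻¹ * (Real.sqrt c)⁻¹) from by ring,
        ← mul_inv, hsc]
    linarith [heq ▸ key]
  -- cross term bound
  have hcsqrt : Real.sqrt c * Real.sqrt c = c := Real.mul_self_sqrt hc.le
  have hsome : ∑ x : {x // x ∈ T} × {x // x ∈ T},
      Real.sqrt (distT n P T (some x)) * Real.sqrt (distT n Q T (some x)) = R / c := by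
    rw [Fintype.sum_prod_type]
    rw [hRdef, Finset.sum_div]
    rw [← Finset.sum_coe_sort T (fun i => (∑ j ∈ T, Real.sqrt (P i j * Q i j)) / c)]
    refine Finset.sum_congr rfl (fun i _ => ?_)
    rw [Finset.sum_div, ← Finset.sum_coe_sort T (fun j => Real.sqrt (P (i:Fin n) j * Q (i:Fin n) j) / c)]
    refine Finset.sum_congr rfl (fun j _ => ?_)
    simp only [distT]
    rw [Real.sqrt_div (hPnonneg _ _), Real.sqrt_div (hQnonneg _ _),
      Real.sqrt_mul (hPnonneg _ _), div_mul_div_comm]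
    rw [show Real.sqrt (T.card : ℝ) * Real.sqrt (T.card : ℝ) = c from hcsqrt]
  have hnone : Real.sqrt (distT n P T none) * Real.sqrt (distT n Q T none) ≤ ε / 2 := by
    have h1 : distT n P T none ≤ ε / 16 := by
      rw [hPnone]
      have := (le_div_iff₀ hc).mpr hTmass
      linarith
    have h2 : distT n Q T none ≤ 5 * ε / 16 := by
      rw [hQnone]
      have := (le_div_iff₀ hc).mpr hTmassQ
      linarith
    calc Real.sqrt (distT n P T none) * Real.sqrt (distT n Q T none)
        ≤ Real.sqrt (ε / 16) * Real.sqrt (5 * ε / 16) := by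
          apply mul_le_mul (Real.sqrt_le_sqrt h1) (Real.sqrt_le_sqrt h2)
            (Real.sqrt_nonneg _) (Real.sqrt_nonneg _)
      _ = Real.sqrt (ε / 16 * (5 * ε / 16)) := (Real.sqrt_mul (by positivity) _).symm
      _ ≤ Real.sqrt ((ε / 2) ^ 2) := Real.sqrt_le_sqrt (by nlinarith)
      _ = ε / 2 := Real.sqrt_sq (by positivity)
  have hcross : ∑ x : Option ({x // x ∈ T} × {x // x ∈ T}),
      Real.sqrt (distT n P T x) * Real.sqrt (distT n Q T x) ≤ 1 - ε / 2 := by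
    rw [Fintype.sum_option, hsome]
    linarith
  -- expansion
  have hexp : ∑ x : Option ({x // x ∈ T} × {x // x ∈ T}),
      (Real.sqrt (distT n P T x) - Real.sqrt (distT n Q T x)) ^ 2
      = 2 - 2 * ∑ x : Option ({x // x ∈ T} × {x // x ∈ T}),
        Real.sqrt (distT n P T x) * Real.sqrt (distT n Q T x) := by
    have h1 : ∀ x, (Real.sqrt (distT n P T x) - Real.sqrt (distT n Q T x)) ^ 2
        = distT n P T x + distT n Q T x
          - 2 * (Real.sqrt (distT n P T x) * Real.sqrt (distT n Q T x)) := by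
      intro x
      rw [sub_sq, Real.sq_sqrt (hdP x), Real.sq_sqrt (hdQ x)]
      ring
    rw [Finset.sum_congr rfl (fun x _ => h1 x), Finset.sum_sub_distrib,
      Finset.sum_add_distrib, hsum1 P, hsum1 Q, ← Finset.mul_sum]
    norm_num
  rw [hexp]
  linarith
end
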